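/- arXiv:math/9712272 — 6 statements merged into one kernel-verified Lean document; each statement's English description precedes it below -/
import Mathlib

section
/- Let (C_β) be a global square sequence with associated function n. Let k ≤ m be natural numbers, let α be an uncountable regular cardinal, and let C be a closed set of ordinals, each greater than α^{+m}, of order type α^{+m}+1. Then C ∩ {β : β is a singular limit ordinal and n(β) ≥ k} contains a closed subset of order type α^{+(m−k)}+1. -/
open Set

/-- The order type of a set of ordinals: the unique ordinal `o` such that
`Set.Iio o` is order-isomorphic to `X` (or `0` if no such ordinal exists,
which can only happen for proper-class-sized `X`). -/
noncomputable def otype.{u} (X : Set Ordinal.{u}) : Ordinal.{u} :=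
  sInf {o : Ordinal.{u} | Nonempty (Set.Iio o ≃o X)}

/-- A set (or class) of ordinals is closed if it contains the supremum of every
nonempty bounded-above subset of itself. -/
def IsClosedSet (C : Set Ordinal) : Prop :=
  ∀ s : Set Ordinal, s ⊆ C → s.Nonempty → BddAbove s → sSup s ∈ C

/-- `limPts X` is the class of limit ordinals `γ` with `sup (X ∩ γ) = γ`. -/
def limPts (X : Set Ordinal) : Set Ordinal :=
  {γ | Order.IsSuccLimit γ ∧ sSup (X ∩ Set.Iio γ) = γ}

/-- An ordinal is singular if it is a limit ordinal whose cofinality is smaller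
than itself. -/
def IsSing (β : Ordinal) : Prop := Order.IsSuccLimit β ∧ β.cof.ord < β

/-- `X` is a closed unbounded subset of the ordinal `β`. -/
def IsClubIn (X : Set Ordinal) (β : Ordinal) : Prop :=
  X ⊆ Set.Iio β ∧
    (∀ s : Set Ordinal, s ⊆ X → s.Nonempty → sSup s < β → sSup s ∈ X) ∧
    ∀ η < β, ∃ x ∈ X, η < x

/-- A global square sequence. -/
structure GlobalSquare where
  C : Ordinal → Set Ordinal
  club : ∀ β, IsSing β → IsClubIn (C β) β
  ot_lt : ∀ β, IsSing β → otype (C β) < β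
  coh : ∀ β, IsSing β → ∀ γ ∈ limPts (C β), γ < β →
    IsSing γ ∧ C γ = C β ∩ Set.Iio γ

/-- `ν` is the function `n` associated to the global square sequence `S`. -/
def IsAssocFn (S : GlobalSquare) (ν : Ordinal → ℕ) : Prop :=
  open scoped Classical in
  ∀ β, IsSing β →
    ν β = if IsSing (otype (S.C β)) then ν (otype (S.C β)) + 1 else 0

/-- Iterated cardinal successor: `succIt α k = α⁺...⁺` (`k` times). -/
noncomputable def succIt (α : Cardinal) : ℕ → Cardinal
  | 0 => α
  | k + 1 => Order.succ (succIt α k)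

/-- An ordinal which is (the ordinal of) a regular cardinal. -/
def IsRegOrd (α : Ordinal) : Prop := ∃ κ : Cardinal, κ.IsRegular ∧ α = κ.ord

/-- End-extension ordering: `EndExt p q` means `p ≤ q`, i.e. `p` end-extends `q`. -/
def EndExt (p q : Set Ordinal) : Prop :=
  q ⊆ p ∧ ∀ x ∈ p \ q, ∀ y ∈ q, y < x

/-- The class forcing associated to a square sequence with associated function `ν`
and `k ∈ ℕ`: nonempty closed bounded sets of ordinals all of whose elements are
regular cardinals or singular of `ν`-value at least `k+1`. -/
def Pforcing (ν : Ordinal → ℕ) (k : ℕ) : Set (Set Ordinal) :=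
  {p | p.Nonempty ∧ IsClosedSet p ∧ BddAbove p ∧
    ∀ α ∈ p, IsRegOrd α ∨ (IsSing α ∧ k + 1 ≤ ν α)}

/-! ### Auxiliary machinery -/

namespace SquareAux

universe u

open Ordinal

lemma exists_lt_of_lt_sSup' {s : Set Ordinal.{u}} {z : Ordinal.{u}} (h : z < sSup s) :
    ∃ d ∈ s, z < d := by
  rcases s.eq_empty_or_nonempty with rfl | hne
  · rw [csSup_empty] at h
    exact absurd h not_lt_zero
  · exact exists_lt_of_lt_csSup hne h

lemma isLimit_sSup {s : Set Ordinal.{u}} (hne : s.Nonempty) (hbd : BddAbove s)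
    (hns : sSup s ∉ s) : Order.IsSuccLimit (sSup s) := by
  refine Ordinal.isSuccLimit_iff.2 ⟨?_, Order.isSuccPrelimit_of_succ_lt ?_⟩
  · intro h0
    obtain ⟨x, hx⟩ := hne
    have hx0 : x = 0 := le_antisymm (h0 ▸ le_csSup hbd hx) zero_le
    exact hns (h0 ▸ hx0 ▸ hx)
  · intro a ha
    obtain ⟨y, hy, hay⟩ := exists_lt_of_lt_sSup' ha
    have hlt : y < sSup s := lt_of_le_of_ne (le_csSup hbd hy) (fun h => hns (h ▸ hy))
    exact lt_of_le_of_lt (Order.succ_le_of_lt hay) hlt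

/-- `X` is closed under suprema of subsets that are bounded by a member of `X`. -/
def GoodClosed (X : Set Ordinal.{u}) : Prop :=
  ∀ s ⊆ X, s.Nonempty → (∃ b ∈ X, ∀ y ∈ s, y ≤ b) → sSup s ∈ X

lemma goodClosed_of_isClosedSet {X : Set Ordinal.{u}} (h : IsClosedSet X) : GoodClosed X := by
  rintro s hs hne ⟨b, _, hub⟩
  exact h s hs hne ⟨b, hub⟩

/-- `e` enumerates the set `X` (of ordinals) along `Iio ρ`. -/
structure IsEnum (ρ : Ordinal.{u}) (e : Ordinal.{u} → Ordinal.{u}) (X : Set Ordinal.{u}) :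
    Prop where
  mono : ∀ ⦃a b⦄, a < b → b < ρ → e a < e b
  mem : ∀ ⦃a⦄, a < ρ → e a ∈ X
  surj : ∀ x ∈ X, ∃ a, a < ρ ∧ e a = x

namespace IsEnum

variable {ρ : Ordinal.{u}} {e : Ordinal.{u} → Ordinal.{u}} {X : Set Ordinal.{u}}

lemma le_mono (he : IsEnum ρ e X) : ∀ ⦃a b⦄, a ≤ b → b < ρ → e a ≤ e b := by
  intro a b hab hb
  rcases lt_or_eq_of_le hab with h | h
  · exact (he.mono h hb).le
  · exact h ▸ le_rfl

lemma reflect (he : IsEnum ρ e X) {a b : Ordinal.{u}} (ha : a < ρ) (_ : b < ρ)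
    (h : e a < e b) : a < b := by
  by_contra hc
  push_neg at hc
  exact absurd h (not_lt.mpr (he.le_mono hc ha))

lemma inter_Iio (he : IsEnum ρ e X) {l : Ordinal.{u}} (hl : l < ρ) :
    X ∩ Set.Iio (e l) = e '' Set.Iio l := by
  ext x
  constructor
  · rintro ⟨hxX, hxlt⟩
    obtain ⟨a, ha, rfl⟩ := he.surj x hxX
    exact ⟨a, he.reflect ha hl hxlt, rfl⟩
  · rintro ⟨a, ha, rfl⟩
    exact ⟨he.mem (lt_trans ha hl), he.mono ha hl⟩

lemma cont (he : IsEnum ρ e X) (hX : GoodClosed X) {l : Ordinal.{u}} (hl : l < ρ)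
    (hlim : Order.IsSuccLimit l) : e l = sSup (e '' Set.Iio l) := by
  have hsub : e '' Set.Iio l ⊆ X := by
    rintro x ⟨a, ha, rfl⟩; exact he.mem (lt_trans ha hl)
  have hne : (e '' Set.Iio l).Nonempty := ⟨e 0, 0, hlim.pos, rfl⟩
  have hub : ∀ y ∈ e '' Set.Iio l, y ≤ e l := by
    rintro y ⟨a, ha, rfl⟩; exact (he.mono ha hl).le
  have hbd : BddAbove (e '' Set.Iio l) := ⟨e l, hub⟩
  have hmem : sSup (e '' Set.Iio l) ∈ X := hX _ hsub hne ⟨e l, he.mem hl, hub⟩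
  obtain ⟨m, hm, hme⟩ := he.surj _ hmem
  have hlm : l ≤ m := by
    by_contra hc
    push_neg at hc
    have h2 : Order.succ m < l := hlim.succ_lt hc
    have h3 : e m < e (Order.succ m) := he.mono (Order.lt_succ m) (lt_trans h2 hl)
    have h4 : e (Order.succ m) ≤ sSup (e '' Set.Iio l) := le_csSup hbd ⟨_, h2, rfl⟩
    rw [← hme] at h4
    exact absurd (h3.trans_le h4) (lt_irrefl _)
  exact le_antisymm (hme ▸ he.le_mono hlm hm) (csSup_le hne hub)

lemma isLimit_apply (he : IsEnum ρ e X) (hX : GoodClosed X) {l : Ordinal.{u}} (hl : l < ρ)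
    (hlim : Order.IsSuccLimit l) : Order.IsSuccLimit (e l) := by
  rw [he.cont hX hl hlim]
  have hne : (e '' Set.Iio l).Nonempty := ⟨e 0, 0, hlim.pos, rfl⟩
  have hub : ∀ y ∈ e '' Set.Iio l, y ≤ e l := by
    rintro y ⟨a, ha, rfl⟩; exact (he.mono ha hl).le
  apply isLimit_sSup hne ⟨e l, hub⟩
  rintro ⟨a, ha, haeq⟩
  have h2 : Order.succ a < l := hlim.succ_lt ha
  have h3 : e a < e (Order.succ a) := he.mono (Order.lt_succ a) (lt_trans h2 hl)
  have h4 : e (Order.succ a) ≤ sSup (e '' Set.Iio l) := le_csSup ⟨e l, hub⟩ ⟨_, h2, rfl⟩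
  rw [haeq] at h3
  exact absurd (h3.trans_le h4) (lt_irrefl _)

lemma mem_limPts (he : IsEnum ρ e X) (hX : GoodClosed X) {l : Ordinal.{u}} (hl : l < ρ)
    (hlim : Order.IsSuccLimit l) : e l ∈ limPts X := by
  refine ⟨he.isLimit_apply hX hl hlim, ?_⟩
  rw [he.inter_Iio hl]
  exact (he.cont hX hl hlim).symm

lemma image_closed (he : IsEnum ρ e X) (hX : GoodClosed X) {V : Set Ordinal.{u}}
    (hV : ∀ x ∈ V, x < ρ) (hVc : IsClosedSet V) : IsClosedSet (e '' V) := by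
  intro s hs hne hbd
  classical
  set s' : Set Ordinal.{u} := V ∩ e ⁻¹' s with hs'def
  have hs'map : ∀ y ∈ s, ∃ a ∈ s', e a = y := by
    intro y hy
    obtain ⟨a, haV, rfl⟩ := hs hy
    exact ⟨a, ⟨haV, hy⟩, rfl⟩
  have hs'ne : s'.Nonempty := by
    obtain ⟨y, hy⟩ := hne
    obtain ⟨a, ha, _⟩ := hs'map y hy
    exact ⟨a, ha⟩
  have hs'bd : BddAbove s' := ⟨ρ, fun a ha => (hV a ha.1).le⟩
  have hmV : sSup s' ∈ V := hVc s' (fun a ha => ha.1) hs'ne hs'bd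
  have hmρ : sSup s' < ρ := hV _ hmV
  have hub : ∀ y ∈ s, y ≤ e (sSup s') := by
    intro y hy
    obtain ⟨a, ha, rfl⟩ := hs'map y hy
    exact he.le_mono (le_csSup hs'bd ha) hmρ
  by_cases hmem : sSup s' ∈ s'
  · have h1 : e (sSup s') ∈ s := hmem.2
    have h2 : sSup s = e (sSup s') := le_antisymm (csSup_le hne hub) (le_csSup hbd h1)
    rw [h2]
    exact ⟨_, hmV, rfl⟩
  · have hlim : Order.IsSuccLimit (sSup s') := isLimit_sSup hs'ne hs'bd hmem
    have hcont := he.cont hX hmρ hlim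
    have hle : sSup s ≤ e (sSup s') := csSup_le hne hub
    have hge : e (sSup s') ≤ sSup s := by
      rw [hcont]
      refine csSup_le ⟨e 0, ⟨0, hlim.pos, rfl⟩⟩ ?_
      rintro y ⟨a, ha, rfl⟩
      obtain ⟨b, hb, hab⟩ := exists_lt_of_lt_csSup hs'ne ha
      have h3 : e a < e b := he.mono hab (hV _ hb.1)
      exact h3.le.trans (le_csSup hbd hb.2)
    have h2 : sSup s = e (sSup s') := le_antisymm hle hge
    rw [h2]
    exact ⟨_, hmV, rfl⟩

end IsEnum

lemma cof_le_aux {γ l : Ordinal.{u}} (p : Ordinal.{u} → Ordinal.{u})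
    (hlt : ∀ a < l, p a < γ)
    (hmono : ∀ ⦃a b⦄, a ≤ b → b < l → p a ≤ p b)
    (hdom : ∀ x < γ, ∃ a, a < l ∧ x ≤ p a) :
    Ordinal.cof γ ≤ Ordinal.cof l := by
  obtain ⟨ι, f, hf, hc⟩ := Ordinal.exists_lsub_cof l
  have hγ : γ = Ordinal.lsub.{u, u} (fun i => p (f i)) := by
    apply le_antisymm
    · apply le_of_forall_lt
      intro x hx
      obtain ⟨a, ha, hap⟩ := hdom x hx
      have h1 : a < Ordinal.lsub.{u, u} f := hf ▸ ha
      rw [Ordinal.lt_lsub_iff] at h1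
      obtain ⟨i, hi⟩ := h1
      have hfi : f i < l := hf ▸ Ordinal.lt_lsub f i
      exact lt_of_le_of_lt (hap.trans (hmono hi hfi)) (Ordinal.lt_lsub _ i)
    · apply Ordinal.lsub_le
      intro i
      exact hlt _ (hf ▸ Ordinal.lt_lsub f i)
  rw [hγ, ← hc]
  exact Ordinal.cof_lsub_le _

lemma cof_eq_aux {γ l : Ordinal.{u}} (p : Ordinal.{u} → Ordinal.{u})
    (hstrict : ∀ ⦃a b⦄, a < b → b < l → p a < p b)
    (hlt : ∀ a < l, p a < γ)
    (hdom : ∀ x < γ, ∃ a, a < l ∧ x ≤ p a) :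
    Ordinal.cof γ = Ordinal.cof l := by
  have hmono : ∀ ⦃a b⦄, a ≤ b → b < l → p a ≤ p b := by
    intro a b hab hb
    rcases lt_or_eq_of_le hab with h | h
    · exact (hstrict h hb).le
    · exact h ▸ le_rfl
  refine le_antisymm (cof_le_aux p hlt hmono hdom) ?_
  classical
  set q : Ordinal.{u} → Ordinal.{u} := fun x => sInf {a | a < l ∧ x ≤ p a} with hq
  have hqspec : ∀ x < γ, q x < l ∧ x ≤ p (q x) := by
    intro x hx
    have hne : {a | a < l ∧ x ≤ p a}.Nonempty := by
      obtain ⟨a, ha, hxa⟩ := hdom x hx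
      exact ⟨a, ha, hxa⟩
    exact csInf_mem hne
  apply cof_le_aux q
  · intro x hx
    exact (hqspec x hx).1
  · intro x y hxy hy
    apply csInf_le_csInf (OrderBot.bddBelow _)
    · obtain ⟨a, ha, hya⟩ := hdom y hy
      exact ⟨a, ha, hya⟩
    · rintro a ⟨ha, hya⟩
      exact ⟨ha, hxy.trans hya⟩
  · intro a ha
    refine ⟨p a, hlt a ha, ?_⟩
    apply le_csInf
    · exact ⟨a, ha, le_rfl⟩
    · rintro b ⟨hb, hpb⟩
      by_contra hc
      push_neg at hc
      exact absurd hpb (not_le.mpr (hstrict hc ha))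

namespace IsEnum

variable {ρ : Ordinal.{u}} {e : Ordinal.{u} → Ordinal.{u}} {X : Set Ordinal.{u}}

lemma cof_eq_top (he : IsEnum ρ e X) {β : Ordinal.{u}} (hub : ∀ x ∈ X, x < β)
    (hdom : ∀ y < β, ∃ x ∈ X, y ≤ x) : Ordinal.cof β = Ordinal.cof ρ := by
  apply cof_eq_aux e (fun a b hab hb => he.mono hab hb) (fun a ha => hub _ (he.mem ha))
  intro y hy
  obtain ⟨x, hx, hyx⟩ := hdom y hy
  obtain ⟨a, ha, rfl⟩ := he.surj x hx
  exact ⟨a, ha, hyx⟩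

lemma cof_eq_limit (he : IsEnum ρ e X) (hX : GoodClosed X) {l : Ordinal.{u}} (hl : l < ρ)
    (hlim : Order.IsSuccLimit l) : Ordinal.cof (e l) = Ordinal.cof l := by
  apply cof_eq_aux e (fun a b hab hb => he.mono hab (lt_trans hb hl))
    (fun a ha => he.mono ha hl)
  intro x hx
  rw [he.cont hX hl hlim] at hx
  obtain ⟨y, ⟨a, ha, rfl⟩, hxy⟩ := exists_lt_of_lt_sSup' hx
  exact ⟨a, ha, hxy.le⟩

end IsEnum

lemma self_le_of_strictMono {ρ : Ordinal.{u}} {e : Ordinal.{u} → Ordinal.{u}}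
    (hmono : ∀ ⦃a b⦄, a < b → b < ρ → e a < e b) : ∀ a < ρ, a ≤ e a := by
  intro a
  induction a using Ordinal.induction with
  | h a IH =>
    intro ha
    by_contra hc
    push_neg at hc
    have h1 := IH (e a) hc (lt_trans hc ha)
    have h2 := hmono hc ha
    exact absurd (h1.trans_lt h2) (lt_irrefl _)

lemma not_iso_of_lt {o o' : Ordinal.{u}} (h : o' < o) (g : Set.Iio o ≃o Set.Iio o') :
    False := by
  classical
  set e : Ordinal.{u} → Ordinal.{u} :=
    fun a => if ha : a < o then (g ⟨a, ha⟩ : Ordinal.{u}) else 0 with he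
  have hmono : ∀ ⦃a b⦄, a < b → b < o → e a < e b := by
    intro a b hab hb
    have ha : a < o := lt_trans hab hb
    rw [he]
    simp only [dif_pos ha, dif_pos hb]
    exact g.strictMono (Subtype.mk_lt_mk.mpr hab)
  have h1 : o' ≤ e o' := self_le_of_strictMono hmono o' h
  have h2 : e o' < o' := by
    rw [he]
    simp only [dif_pos h]
    exact (g ⟨o', h⟩).2
  exact absurd (h1.trans_lt h2) (lt_irrefl _)

lemma iso_Iio_unique {o o' : Ordinal.{u}} (g : Set.Iio o ≃o Set.Iio o') : o = o' := by
  rcases lt_trichotomy o o' with h | h | h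
  · exact (not_iso_of_lt h g.symm).elim
  · exact h
  · exact (not_iso_of_lt h g).elim

lemma otype_eq_of_iso {X : Set Ordinal.{u}} {o : Ordinal.{u}} (g : Set.Iio o ≃o X) :
    otype X = o := by
  have h : {o' : Ordinal.{u} | Nonempty (Set.Iio o' ≃o X)} = {o} := by
    ext o'
    simp only [Set.mem_setOf_eq, Set.mem_singleton_iff]
    constructor
    · rintro ⟨g'⟩
      exact iso_Iio_unique (g'.trans g.symm)
    · rintro rfl
      exact ⟨g⟩
  rw [otype, h, csInf_singleton]

lemma nonempty_iso_otype {X : Set Ordinal.{u}} {o : Ordinal.{u}} (hot : otype X = o)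
    (h0 : o ≠ 0) : Nonempty (Set.Iio o ≃o X) := by
  rcases Set.eq_empty_or_nonempty {o' : Ordinal.{u} | Nonempty (Set.Iio o' ≃o X)} with
    hemp | ⟨o'', hg⟩
  · rw [otype, hemp] at hot
    have hzero : sInf (∅ : Set Ordinal.{u}) = 0 :=
      (dif_neg Set.not_nonempty_empty).trans Ordinal.bot_eq_zero
    rw [hzero] at hot
    exact absurd hot.symm h0
  · obtain ⟨g⟩ := hg
    have h2 := otype_eq_of_iso g
    rw [h2] at hot
    exact hot ▸ ⟨g⟩

lemma exists_iso_Iio {X : Set Ordinal.{u}} (hbd : BddAbove X) :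
    ∃ o : Ordinal.{u}, Nonempty (Set.Iio o ≃o X) := by
  classical
  set c : Ordinal.{u} := sSup X + 1 with hc
  have hsupc : sSup X < c := by
    rw [hc, Ordinal.add_one_eq_succ]
    exact Order.lt_succ _
  have hXc : ∀ x ∈ X, x < c := fun x hx => lt_of_le_of_lt (le_csSup hbd hx) hsupc
  set s : Set Ordinal.{u} := X ∪ Set.Ici c with hs
  have hsu : ¬ BddAbove s := by
    rintro ⟨b, hb⟩
    have h1 : max b c + 1 ∈ s := by
      right
      have : c ≤ max b c + 1 := le_trans (le_max_right b c) (by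
        rw [Ordinal.add_one_eq_succ]; exact (Order.lt_succ _).le)
      exact this
    have h2 : max b c + 1 ≤ b := hb h1
    have h3 : b < max b c + 1 := lt_of_le_of_lt (le_max_left b c) (by
      rw [Ordinal.add_one_eq_succ]; exact Order.lt_succ _)
    exact absurd (h3.trans_le h2) (lt_irrefl _)
  have hmem : ∀ a : Ordinal.{u}, Ordinal.enumOrd s a ∈ s := Ordinal.enumOrd_mem hsu
  have hsm := Ordinal.enumOrd_strictMono hsu
  obtain ⟨o, ho⟩ := Ordinal.enumOrd_surjective hsu (show c ∈ s from Or.inr Set.self_mem_Ici)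
  refine ⟨o, ⟨?_⟩⟩
  have hin : ∀ a : Set.Iio o, Ordinal.enumOrd s a.1 ∈ X := by
    rintro ⟨a, ha⟩
    have h1 : Ordinal.enumOrd s a < c := ho ▸ hsm ha
    rcases hmem a with hX | hI
    · exact hX
    · exact absurd h1 (not_lt.mpr hI)
  have hsurj : ∀ x : X, ∃ a : Set.Iio o, Ordinal.enumOrd s a.1 = x.1 := by
    rintro ⟨x, hx⟩
    obtain ⟨a, ha⟩ := Ordinal.enumOrd_surjective hsu (show x ∈ s from Or.inl hx)
    have hax : a < o := by
      apply hsm.lt_iff_lt.mp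
      rw [ha, ho]
      exact hXc x hx
    exact ⟨⟨a, hax⟩, ha⟩
  have hFmono : StrictMono (fun a : Set.Iio o => (⟨Ordinal.enumOrd s a.1, hin a⟩ : X)) := by
    intro a b hab
    exact Subtype.mk_lt_mk.mpr (hsm (Subtype.coe_lt_coe.mpr hab))
  refine StrictMono.orderIsoOfSurjective _ hFmono ?_
  intro x
  obtain ⟨a, ha⟩ := hsurj x
  exact ⟨a, Subtype.ext ha⟩

lemma isEnum_of_iso {ρ : Ordinal.{u}} {X : Set Ordinal.{u}} (g : Set.Iio ρ ≃o X) :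
    ∃ e : Ordinal.{u} → Ordinal.{u}, IsEnum ρ e X := by
  classical
  refine ⟨fun a => if ha : a < ρ then (g ⟨a, ha⟩ : Ordinal.{u}) else 0, ?_, ?_, ?_⟩
  · intro a b hab hb
    have ha : a < ρ := lt_trans hab hb
    simp only [dif_pos ha, dif_pos hb]
    exact g.strictMono (Subtype.mk_lt_mk.mpr hab)
  · intro a ha
    simp only [dif_pos ha]
    exact (g ⟨a, ha⟩).2
  · intro x hx
    have hlt : ((g.symm ⟨x, hx⟩ : Set.Iio ρ) : Ordinal.{u}) < ρ := (g.symm ⟨x, hx⟩).2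
    refine ⟨(g.symm ⟨x, hx⟩).1, hlt, ?_⟩
    rw [dif_pos hlt]
    exact congrArg Subtype.val (g.apply_symm_apply ⟨x, hx⟩)

lemma IsEnum.otype_eq {ρ : Ordinal.{u}} {e : Ordinal.{u} → Ordinal.{u}} {X : Set Ordinal.{u}}
    (he : IsEnum ρ e X) : otype X = ρ := by
  have hFmono : StrictMono (fun a : Set.Iio ρ => (⟨e a.1, he.mem a.2⟩ : X)) := by
    intro a b hab
    exact Subtype.mk_lt_mk.mpr (he.mono (Subtype.coe_lt_coe.mpr hab) b.2)
  have hFsurj : Function.Surjective (fun a : Set.Iio ρ => (⟨e a.1, he.mem a.2⟩ : X)) := by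
    rintro ⟨x, hx⟩
    obtain ⟨a, ha, haeq⟩ := he.surj x hx
    exact ⟨⟨a, ha⟩, Subtype.ext haeq⟩
  exact otype_eq_of_iso (StrictMono.orderIsoOfSurjective _ hFmono hFsurj)

lemma IsEnum.restrict {ρ σ : Ordinal.{u}} {e : Ordinal.{u} → Ordinal.{u}}
    {X : Set Ordinal.{u}} (he : IsEnum ρ e X) (h : σ ≤ ρ) :
    IsEnum σ e (e '' Set.Iio σ) := by
  refine ⟨fun a b hab hb => he.mono hab (lt_of_lt_of_le hb h), fun a ha => ⟨a, ha, rfl⟩, ?_⟩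
  rintro x ⟨a, ha, rfl⟩
  exact ⟨a, ha, rfl⟩

lemma IsEnum.comp {ρ σ : Ordinal.{u}} {e f : Ordinal.{u} → Ordinal.{u}}
    {X V : Set Ordinal.{u}} (hf : IsEnum σ f V) (he : IsEnum ρ e X)
    (hVρ : ∀ x ∈ V, x < ρ) : IsEnum σ (fun a => e (f a)) (e '' V) := by
  refine ⟨?_, ?_, ?_⟩
  · intro a b hab hb
    exact he.mono (hf.mono hab hb) (hVρ _ (hf.mem hb))
  · intro a ha
    exact ⟨f a, hf.mem ha, rfl⟩
  · rintro x ⟨a, haV, rfl⟩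
    obtain ⟨i, hi, rfl⟩ := hf.surj a haV
    exact ⟨i, hi, rfl⟩

lemma otype_limits {κ : Cardinal.{u}} (hκ : Cardinal.aleph0 < κ) :
    otype {l : Ordinal.{u} | l ≤ κ.ord ∧ Order.IsSuccLimit l} = κ.ord + 1 := by
  have hκ0 : Cardinal.aleph0 ≤ κ := hκ.le
  have hord : Order.IsSuccLimit (κ.ord) := Cardinal.isSuccLimit_ord hκ0
  have homega : ω ≤ κ.ord := Ordinal.omega0_le_of_isSuccLimit hord
  have htop : ω * (1 + κ.ord) = κ.ord := by
    rw [Ordinal.one_add_of_omega0_le homega]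
    apply le_antisymm
    · rw [Ordinal.mul_le_iff_of_isSuccLimit hord]
      intro ξ hξ
      apply le_of_lt
      rw [Cardinal.lt_ord, Ordinal.card_mul, Ordinal.card_omega0]
      exact Cardinal.mul_lt_of_lt hκ0 hκ (Cardinal.lt_ord.mp hξ)
    · calc κ.ord = 1 * κ.ord := (one_mul _).symm
        _ ≤ ω * κ.ord := mul_le_mul_left Ordinal.one_lt_omega0.le _
  have henum : IsEnum (κ.ord + 1) (fun ξ => ω * (1 + ξ))
      {l : Ordinal.{u} | l ≤ κ.ord ∧ Order.IsSuccLimit l} := by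
    refine ⟨?_, ?_, ?_⟩
    · intro a b hab _
      rw [mul_lt_mul_iff_right₀ Ordinal.omega0_pos]
      exact add_lt_add_right hab 1
    · intro a ha
      rw [Ordinal.add_one_eq_succ, Order.lt_succ_iff] at ha
      constructor
      · calc ω * (1 + a) ≤ ω * (1 + κ.ord) := mul_le_mul_right (add_le_add_right ha 1) ω
          _ = κ.ord := htop
      · exact Ordinal.isSuccLimit_mul_left Ordinal.isSuccLimit_omega0
          (lt_of_lt_of_le zero_lt_one le_self_add)
    · rintro l ⟨hlκ, hlim⟩
      obtain ⟨q, rfl⟩ := (Ordinal.isSuccLimit_iff_omega0_dvd.mp hlim).2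
      have hq0 : q ≠ 0 := by
        rintro rfl
        exact hlim.ne_zero (mul_zero ω)
      have h1q : (1 : Ordinal.{u}) ≤ q := Ordinal.one_le_iff_ne_zero.mpr hq0
      refine ⟨q - 1, ?_, ?_⟩
      · rw [Ordinal.add_one_eq_succ, Order.lt_succ_iff]
        by_contra hc
        push_neg at hc
        have h2 : ω * (1 + κ.ord) < ω * (1 + (q - 1)) := by
          rw [mul_lt_mul_iff_right₀ Ordinal.omega0_pos]
          exact add_lt_add_right hc 1
        rw [htop, Ordinal.add_sub_cancel_of_le h1q] at h2
        exact absurd hlκ (not_le.mpr h2)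
      · rw [Ordinal.add_sub_cancel_of_le h1q]
  exact henum.otype_eq

lemma sing_of_isEnum {ρ : Ordinal.{u}} {e : Ordinal.{u} → Ordinal.{u}} {X : Set Ordinal.{u}}
    (he : IsEnum ρ e X) (hX : GoodClosed X) {l b : Ordinal.{u}}
    (hl : l < ρ) (hlim : Order.IsSuccLimit l) (hlb : l ≤ b) (hbe : b < e l) : IsSing (e l) := by
  refine ⟨he.isLimit_apply hX hl hlim, ?_⟩
  rw [he.cof_eq_limit hX hl hlim]
  exact lt_of_le_of_lt (le_trans (Ordinal.ord_cof_le l) hlb) hbe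

end SquareAux

namespace SquareAux

universe u

open Ordinal

lemma succIt_regular {α : Cardinal.{u}} (hreg : α.IsRegular) (hunc : Cardinal.aleph0 < α) :
    ∀ n, (succIt α n).IsRegular ∧ Cardinal.aleph0 < succIt α n := by
  intro n
  induction n with
  | zero => exact ⟨hreg, hunc⟩
  | succ n ih => exact ⟨Cardinal.isRegular_succ ih.1.aleph0_le,
      lt_of_lt_of_le ih.2 (Order.le_succ _)⟩

lemma key (S : GlobalSquare) (ν : Ordinal.{0} → ℕ) (hν : IsAssocFn S ν)
    (α : Cardinal.{0}) (hreg : α.IsRegular) (hunc : Cardinal.aleph0 < α) :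
    ∀ (k j : ℕ), k ≤ j → ∀ C : Set Ordinal.{0}, IsClosedSet C →
      (∀ x ∈ C, (succIt α j).ord < x) → otype C = (succIt α j).ord + 1 →
      ∃ D : Set Ordinal.{0}, D ⊆ C ∩ {β | IsSing β ∧ k ≤ ν β} ∧
        IsClosedSet D ∧ otype D = (succIt α (j - k)).ord + 1 := by
  intro k
  induction k with
  | zero =>
    intro j _ C hclosed hgt hot
    obtain ⟨hregj, huncj⟩ := succIt_regular hreg hunc j
    set κ := succIt α j with hκdef
    have hκord : Order.IsSuccLimit (κ.ord) := Cardinal.isSuccLimit_ord hregj.aleph0_le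
    have hρ0 : (κ.ord + 1 : Ordinal.{0}) ≠ 0 := by
      apply ne_of_gt
      exact lt_of_le_of_lt zero_le
        (by rw [Ordinal.add_one_eq_succ]; exact Order.lt_succ _)
    obtain ⟨g⟩ := nonempty_iso_otype hot hρ0
    obtain ⟨e, he⟩ := isEnum_of_iso g
    have hgc : GoodClosed C := goodClosed_of_isClosedSet hclosed
    set L : Set Ordinal.{0} := {l | l ≤ κ.ord ∧ Order.IsSuccLimit l} with hLdef
    have hLsub : ∀ l ∈ L, l < κ.ord + 1 := by
      intro l hl
      rw [Ordinal.add_one_eq_succ, Order.lt_succ_iff]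
      exact hl.1
    have hLclosed : IsClosedSet L := by
      intro s hs hne hbd
      by_cases hmem : sSup s ∈ s
      · exact hs hmem
      · refine ⟨csSup_le hne (fun x hx => (hs hx).1), isLimit_sSup hne hbd hmem⟩
    refine ⟨e '' L, ?_, he.image_closed hgc hLsub hLclosed, ?_⟩
    · rintro y ⟨l, hlL, rfl⟩
      have hl : l < κ.ord + 1 := hLsub l hlL
      have hC : e l ∈ C := he.mem hl
      exact ⟨hC, sing_of_isEnum he hgc hl hlL.2 hlL.1 (hgt _ hC), Nat.zero_le _⟩
    · have hotL : otype L = κ.ord + 1 := otype_limits huncj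
      obtain ⟨gL⟩ := nonempty_iso_otype hotL hρ0
      obtain ⟨eL, heL⟩ := isEnum_of_iso gL
      have hcomp := heL.comp he hLsub
      rw [Nat.sub_zero]
      exact hcomp.otype_eq
  | succ k IH =>
    intro j hkj C hclosed hgt hot
    obtain ⟨hregj, huncj⟩ := succIt_regular hreg hunc j
    set κ := succIt α j with hκdef
    have hj1 : j - 1 + 1 = j := Nat.succ_pred_eq_of_pos (lt_of_lt_of_le (Nat.zero_lt_succ k) hkj)
    set κ' := succIt α (j - 1) with hκ'def
    have hκκ' : κ' < κ := by
      rw [hκdef, ← hj1]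
      exact Order.lt_succ _
    set μ := κ'.ord with hμdef
    have hμκ : μ < κ.ord := Cardinal.ord_lt_ord.mpr hκκ'
    have hκord : Order.IsSuccLimit (κ.ord) := Cardinal.isSuccLimit_ord hregj.aleph0_le
    have hρ0 : (κ.ord + 1 : Ordinal.{0}) ≠ 0 := by
      apply ne_of_gt
      exact lt_of_le_of_lt zero_le
        (by rw [Ordinal.add_one_eq_succ]; exact Order.lt_succ _)
    obtain ⟨g⟩ := nonempty_iso_otype hot hρ0
    obtain ⟨e, he⟩ := isEnum_of_iso g
    have hgc : GoodClosed C := goodClosed_of_isClosedSet hclosed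
    have hltop : κ.ord < κ.ord + 1 := by
      rw [Ordinal.add_one_eq_succ]; exact Order.lt_succ _
    set β := e κ.ord with hβdef
    have hβC : β ∈ C := he.mem hltop
    have hβgt : κ.ord < β := hgt _ hβC
    have hcofβ : Ordinal.cof β = κ := by
      rw [hβdef, he.cof_eq_limit hgc hltop hκord, Cardinal.IsRegular.cof_eq hregj]
    have hβsing : IsSing β := by
      refine ⟨hβdef ▸ he.isLimit_apply hgc hltop hκord, ?_⟩
      rw [hcofβ]
      exact hβgt
    obtain ⟨hCβsub, hCβcl, hCβunb⟩ := S.club β hβsing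
    set ρ := otype (S.C β) with hρdef
    have hρβ : ρ < β := S.ot_lt β hβsing
    obtain ⟨oβ, ⟨gβ0⟩⟩ := exists_iso_Iio (X := S.C β) ⟨β, fun x hx => (hCβsub hx).le⟩
    have hoβ : oβ = ρ := by rw [hρdef, otype_eq_of_iso gβ0]
    obtain ⟨f, hf⟩ := isEnum_of_iso (hoβ ▸ gβ0)
    have hgcβ : GoodClosed (S.C β) := by
      rintro s hs hne ⟨b, hbX, hub⟩
      exact hCβcl s hs hne (lt_of_le_of_lt (csSup_le hne hub) (hCβsub hbX))
    have hcofρ : Ordinal.cof ρ = κ := by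
      have h1 : Ordinal.cof β = Ordinal.cof ρ := by
        apply hf.cof_eq_top (fun x hx => hCβsub hx)
        intro y hy
        obtain ⟨x, hx, hyx⟩ := hCβunb y hy
        exact ⟨x, hx, hyx.le⟩
      rw [← h1, hcofβ]
    have hκpos : (0 : Cardinal.{0}) < κ := lt_of_lt_of_le Cardinal.aleph0_pos hregj.aleph0_le
    have hρlim : Order.IsSuccLimit ρ := by
      rcases Ordinal.zero_or_succ_or_isSuccLimit ρ with h0 | ⟨a, ha⟩ | hl
      · rw [h0, Ordinal.cof_zero] at hcofρ
        exact absurd hcofρ.symm hκpos.ne'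
      · rw [← ha, Ordinal.cof_succ] at hcofρ
        exact absurd hcofρ.symm (lt_of_lt_of_le Cardinal.one_lt_aleph0 hregj.aleph0_le).ne'
      · exact hl
    have hκρ : κ.ord ≤ ρ := by
      have h1 := Ordinal.ord_cof_le ρ
      rwa [hcofρ] at h1
    have hμρ : μ < ρ := lt_of_lt_of_le hμκ hκρ
    set D' : Set Ordinal.{0} := e '' Set.Iio κ.ord with hD'def
    have hD'C : ∀ d ∈ D', d ∈ C := by
      rintro d ⟨a, ha, rfl⟩
      exact he.mem (lt_trans ha hltop)
    have hD'lt : ∀ d ∈ D', d < β := by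
      rintro d ⟨a, ha, rfl⟩
      exact he.mono ha hltop
    have hcontβ : β = sSup D' := by
      rw [hβdef, hD'def]
      exact he.cont hgc hltop hκord
    have hD'dom : ∀ y, y < β → ∃ d ∈ D', y < d := by
      intro y hy
      rw [hcontβ] at hy
      exact exists_lt_of_lt_sSup' hy
    set U : Set Ordinal.{0} := {l | l < ρ ∧ Order.IsSuccLimit l ∧ μ < l ∧ f l ∈ limPts D'} with hUdef
    classical
    have hUdom : ∀ η, η < ρ → ∃ l ∈ U, η < l := by
      intro η hη
      set η' := max η μ with hη'def
      have hη'ρ : η' < ρ := max_lt hη hμρ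
      have hsucc : η' + 1 < ρ := by
        rw [Ordinal.add_one_eq_succ]; exact hρlim.succ_lt hη'ρ
      set ΨD : Ordinal.{0} → Ordinal.{0} :=
        fun z => if hz : z < β then (hD'dom z hz).choose else 0 with hΨDdef
      set ΨC : Ordinal.{0} → Ordinal.{0} :=
        fun z => if hz : z < β then (hCβunb z hz).choose else 0 with hΨCdef
      have hΨDspec : ∀ z, z < β → ΨD z ∈ D' ∧ z < ΨD z := by
        intro z hz
        rw [hΨDdef]
        simp only [dif_pos hz]
        exact ⟨(hD'dom z hz).choose_spec.1, (hD'dom z hz).choose_spec.2⟩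
      have hΨCspec : ∀ z, z < β → ΨC z ∈ S.C β ∧ z < ΨC z := by
        intro z hz
        rw [hΨCdef]
        simp only [dif_pos hz]
        exact ⟨(hCβunb z hz).choose_spec.1, (hCβunb z hz).choose_spec.2⟩
      set x : ℕ → Ordinal.{0} :=
        fun n => Nat.rec (f (η' + 1)) (fun _ xn => ΨC (ΨD xn)) n with hxdef
      have hx0 : x 0 = f (η' + 1) := rfl
      have hxsucc : ∀ n, x (n + 1) = ΨC (ΨD (x n)) := fun n => rfl
      have hxC : ∀ n, x n ∈ S.C β := by
        intro n
        induction n with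
        | zero => exact hx0 ▸ hf.mem hsucc
        | succ n ih =>
          have h1 : x n < β := hCβsub ih
          have h2 := hΨDspec _ h1
          have h3 : ΨD (x n) < β := hD'lt _ h2.1
          exact (hxsucc n) ▸ (hΨCspec _ h3).1
      have hxβ : ∀ n, x n < β := fun n => hCβsub (hxC n)
      have hxD : ∀ n, ΨD (x n) ∈ D' ∧ x n < ΨD (x n) ∧ ΨD (x n) < x (n + 1) := by
        intro n
        have h1 := hΨDspec _ (hxβ n)
        have h2 := hΨCspec _ (hD'lt _ h1.1)
        exact ⟨h1.1, h1.2, (hxsucc n) ▸ h2.2⟩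
      have hxlt : ∀ n, x n < x (n + 1) := fun n => lt_trans (hxD n).2.1 (hxD n).2.2
      set γ := sSup (Set.range x) with hγdef
      have hγβ : γ < β := by
        have h1 : (⨆ n, x n) < β := by
          refine Ordinal.iSup_lt_ord_lift ?_ hxβ
          rw [Cardinal.mk_nat, Cardinal.lift_aleph0, hcofβ]
          exact huncj
        exact h1
      have hbdx : BddAbove (Set.range x) := by
        refine ⟨β, ?_⟩
        rintro _ ⟨n, rfl⟩
        exact (hxβ n).le
      have hxle : ∀ n, x n ≤ γ := fun n => le_csSup hbdx ⟨n, rfl⟩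
      have hγCβ : γ ∈ S.C β := by
        apply hCβcl _ _ ⟨x 0, Set.mem_range_self 0⟩ hγβ
        rintro _ ⟨n, rfl⟩
        exact hxC n
      obtain ⟨l, hlρ, hlf⟩ := hf.surj γ hγCβ
      have hγnotx : ∀ n, x n < γ := fun n => lt_of_lt_of_le (hxlt n) (hxle (n + 1))
      have hγlim : Order.IsSuccLimit γ := by
        apply isLimit_sSup ⟨x 0, Set.mem_range_self 0⟩ hbdx
        rintro ⟨n, hn⟩
        have h1 := hγnotx n
        rw [hγdef, ← hn] at h1
        exact absurd h1 (lt_irrefl _)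
      have hlim_l : Order.IsSuccLimit l := by
        rcases Ordinal.zero_or_succ_or_isSuccLimit l with h0 | ⟨a, ha⟩ | hl
        · exfalso
          have h1 : f l ≤ f (η' + 1) := hf.le_mono (h0 ▸ zero_le) hsucc
          rw [hlf] at h1
          exact absurd (lt_of_le_of_lt h1 (hx0 ▸ hγnotx 0)) (lt_irrefl _)
        · exfalso
          have hal : a < l := ha ▸ Order.lt_succ a
          have haρ : a < ρ := lt_trans hal hlρ
          have hfa : ∀ n, x n ≤ f a := by
            intro n
            obtain ⟨b, hb, hbeq⟩ := hf.surj (x n) (hxC n)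
            have hbl : b < l := hf.reflect hb hlρ (by rw [hbeq, hlf]; exact hγnotx n)
            have hba : b ≤ a := by
              rw [← ha, Order.lt_succ_iff] at hbl
              exact hbl
            rw [← hbeq]
            exact hf.le_mono hba haρ
          have h1 : γ ≤ f a := by
            apply csSup_le ⟨x 0, Set.mem_range_self 0⟩
            rintro _ ⟨n, rfl⟩
            exact hfa n
          have h2 : f a < γ := hlf ▸ hf.mono hal hlρ
          exact absurd (h1.trans_lt h2) (lt_irrefl _)
        · exact hl
      have hηl : η' < l := by
        have h1 : f (η' + 1) < f l := by
          rw [hlf]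
          exact hx0 ▸ hγnotx 0
        have h2 := hf.reflect hsucc hlρ h1
        have h3 : η' < η' + 1 := by
          rw [Ordinal.add_one_eq_succ]; exact Order.lt_succ η'
        exact lt_of_lt_of_le h3 h2.le
      have hflim : f l ∈ limPts D' := by
        refine ⟨hlf ▸ hγlim, ?_⟩
        rw [hlf]
        have hΨDγ : ∀ n, ΨD (x n) ∈ D' ∩ Set.Iio γ :=
          fun n => ⟨(hxD n).1, lt_of_lt_of_le (hxD n).2.2 (hxle (n + 1))⟩
        apply le_antisymm
        · apply csSup_le ⟨ΨD (x 0), hΨDγ 0⟩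
          rintro d ⟨_, hd⟩
          exact hd.le
        · apply le_of_forall_lt
          intro z hz
          obtain ⟨_, ⟨n, rfl⟩, hzx⟩ := exists_lt_of_lt_csSup ⟨x 0, Set.mem_range_self 0⟩ hz
          have h1 : z < ΨD (x n) := lt_trans hzx (hxD n).2.1
          exact lt_of_lt_of_le h1 (le_csSup ⟨γ, fun d hd => hd.2.le⟩ (hΨDγ n))
      exact ⟨l, ⟨hlρ, hlim_l, lt_of_le_of_lt (le_max_right η μ) hηl, hflim⟩,
        lt_of_le_of_lt (le_max_left η μ) hηl⟩
    have hUgood : GoodClosed U := by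
      rintro s hs hne ⟨b, hbU, hub⟩
      by_cases hmem : sSup s ∈ s
      · exact hs hmem
      have hbd : BddAbove s := ⟨b, hub⟩
      have hmρ : sSup s < ρ := lt_of_le_of_lt (csSup_le hne hub) hbU.1
      have hmlim : Order.IsSuccLimit (sSup s) := isLimit_sSup hne hbd hmem
      have hμm : μ < sSup s := by
        obtain ⟨z, hz⟩ := hne
        exact lt_of_lt_of_le (hs hz).2.2.1 (le_csSup hbd hz)
      have hzd : ∀ z, z < f (sSup s) → ∃ d ∈ D' ∩ Set.Iio (f (sSup s)), z < d := by
        intro z hz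
        rw [hf.cont hgcβ hmρ hmlim] at hz
        obtain ⟨_, ⟨a, ha, rfl⟩, hza⟩ := exists_lt_of_lt_sSup' hz
        obtain ⟨l', hl', hal'⟩ := exists_lt_of_lt_csSup hne ha
        have hl'ρ : l' < ρ := (hs hl').1
        have hl'm : l' ≤ sSup s := le_csSup hbd hl'
        have h1 : f a < f l' := hf.mono hal' hl'ρ
        have h2 : sSup (D' ∩ Set.Iio (f l')) = f l' := (hs hl').2.2.2.2
        have h3 : z < sSup (D' ∩ Set.Iio (f l')) := by
          rw [h2]
          exact lt_trans hza h1
        obtain ⟨d, hd, hzd⟩ := exists_lt_of_lt_sSup' h3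
        refine ⟨d, ⟨hd.1, lt_of_lt_of_le hd.2 (hf.le_mono hl'm hmρ)⟩, hzd⟩
      refine ⟨hmρ, hmlim, hμm, hf.isLimit_apply hgcβ hmρ hmlim, ?_⟩
      have hpos : (0 : Ordinal.{0}) < f (sSup s) := (hf.isLimit_apply hgcβ hmρ hmlim).pos
      obtain ⟨d0, hd0, _⟩ := hzd 0 hpos
      apply le_antisymm
      · apply csSup_le ⟨d0, hd0⟩
        rintro d ⟨_, hd⟩
        exact hd.le
      · apply le_of_forall_lt
        intro z hz
        obtain ⟨d, hd, hzd'⟩ := hzd z hz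
        exact lt_of_lt_of_le hzd' (le_csSup ⟨f (sSup s), fun d' hd' => hd'.2.le⟩ hd)
    have hUbd : BddAbove U := ⟨ρ, fun l hl => hl.1.le⟩
    obtain ⟨oU, ⟨gU0⟩⟩ := exists_iso_Iio hUbd
    obtain ⟨u, hu⟩ := isEnum_of_iso gU0
    have hcofU : Ordinal.cof oU = κ := by
      have h1 : Ordinal.cof ρ = Ordinal.cof oU := by
        apply hu.cof_eq_top (fun l hl => hl.1)
        intro y hy
        obtain ⟨l, hl, hyl⟩ := hUdom y hy
        exact ⟨l, hl, hyl.le⟩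
      rw [← h1, hcofρ]
    have hμoU : μ + 1 ≤ oU := by
      have h2 : κ.ord ≤ oU := by
        have h3 := Ordinal.ord_cof_le oU
        rwa [hcofU] at h3
      rw [Ordinal.add_one_eq_succ, Order.succ_le_iff]
      exact lt_of_lt_of_le hμκ h2
    set T : Set Ordinal.{0} := u '' Set.Iio (μ + 1) with hTdef
    have huT : IsEnum (μ + 1) u T := hu.restrict hμoU
    have hTot : otype T = μ + 1 := huT.otype_eq
    have hIioClosed : IsClosedSet (Set.Iio (μ + 1)) := by
      intro s hs hne _
      have h1 : sSup s ≤ μ := by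
        apply csSup_le hne
        intro z hz
        have h2 := hs hz
        rw [Set.mem_Iio, Ordinal.add_one_eq_succ, Order.lt_succ_iff] at h2
        exact h2
      rw [Set.mem_Iio, Ordinal.add_one_eq_succ, Order.lt_succ_iff]
      exact h1
    have hTclosed : IsClosedSet T :=
      hu.image_closed hUgood (fun z hz => lt_of_lt_of_le hz hμoU) hIioClosed
    have hTU : ∀ z ∈ T, z ∈ U := by
      rintro z ⟨a, ha, rfl⟩
      exact hu.mem (lt_of_lt_of_le ha hμoU)
    have hTgt : ∀ z ∈ T, μ < z := fun z hz => (hTU z hz).2.2.1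
    have hkj1 : k ≤ j - 1 := Nat.le_pred_of_lt hkj
    obtain ⟨V, hVsub, hVclosed, hVot⟩ := IH (j - 1) hkj1 T hTclosed
      (by rw [← hκ'def, ← hμdef]; exact hTgt) (by rw [← hκ'def, ← hμdef]; exact hTot)
    have hsubnat : j - 1 - k = j - (k + 1) := by omega
    have hVU : ∀ a ∈ V, a ∈ U := fun a ha => hTU a (hVsub ha).1
    have hVρ : ∀ a ∈ V, a < ρ := fun a ha => (hVU a ha).1
    refine ⟨f '' V, ?_, hf.image_closed hgcβ hVρ hVclosed, ?_⟩
    · rintro y ⟨a, haV, rfl⟩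
      obtain ⟨haρ, halim, hμa, hfalim⟩ := hVU a haV
      have hsingA : IsSing a := (hVsub haV).2.1
      have hka : k ≤ ν a := (hVsub haV).2.2
      obtain ⟨hfl, hfsup⟩ := hfalim
      have hfaC : f a ∈ C := by
        have hne' : (D' ∩ Set.Iio (f a)).Nonempty := by
          by_contra hc
          rw [Set.not_nonempty_iff_eq_empty] at hc
          rw [hc, csSup_empty] at hfsup
          exact hfl.ne_zero hfsup.symm
        have h1 := hclosed _ (fun d hd => hD'C _ hd.1) hne' ⟨f a, fun d hd => hd.2.le⟩
        rwa [hfsup] at h1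
      have hlimCβ : f a ∈ limPts (S.C β) := hf.mem_limPts hgcβ haρ halim
      have hfaβ : f a < β := hCβsub (hf.mem haρ)
      obtain ⟨hsingγ, hCeq⟩ := S.coh β hβsing (f a) hlimCβ hfaβ
      have hotγ : otype (S.C (f a)) = a := by
        rw [hCeq, hf.inter_Iio haρ]
        exact (hf.restrict haρ.le).otype_eq
      have hνγ : ν (f a) = ν a + 1 := by
        have h1 := hν (f a) hsingγ
        rw [hotγ] at h1
        rw [h1, if_pos hsingA]
      refine ⟨hfaC, hsingγ, ?_⟩
      rw [hνγ]
      exact Nat.succ_le_succ hka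
    · have hVbd : BddAbove V := ⟨ρ, fun a ha => (hVρ a ha).le⟩
      obtain ⟨oV, ⟨gV⟩⟩ := exists_iso_Iio hVbd
      obtain ⟨eV, heV⟩ := isEnum_of_iso gV
      have hoV : oV = (succIt α (j - 1 - k)).ord + 1 := by
        rw [← heV.otype_eq, hVot]
      have hcomp := heV.comp hf hVρ
      rw [hcomp.otype_eq, hoV, hsubnat]

end SquareAux

/-- Lemma 3 of Friedman, "New Sigma^1_3 Facts". -/
theorem square_lemma_closed_subset (S : GlobalSquare) (ν : Ordinal → ℕ)
    (hν : IsAssocFn S ν) (k m : ℕ) (hkm : k ≤ m)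
    (α : Cardinal) (hreg : α.IsRegular) (hunc : Cardinal.aleph0 < α)
    (C : Set Ordinal) (hclosed : IsClosedSet C)
    (hgt : ∀ x ∈ C, (succIt α m).ord < x)
    (hot : otype C = (succIt α m).ord + 1) :
    ∃ D : Set Ordinal, D ⊆ C ∩ {β | IsSing β ∧ k ≤ ν β} ∧
      IsClosedSet D ∧ otype D = (succIt α (m - k)).ord + 1 :=
  SquareAux.key S ν hν α hreg hunc k m hkm C hclosed hgt hot
end

section
/- Let (C_β) be a global square sequence. Let m be a natural number, let α be an uncountable regular cardinal, and let C be a closed set of ordinals, each greater than α^{+m}, of order type α^{+m}+1. Then C ∩ {β : β is a singular limit ordinal} contains a closed subset of order type α^{+m}+1. -/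
open Set

section AuxLemmas

open Ordinal in
private theorem otype_eq_of_iso {o : Ordinal} {X : Set Ordinal} (h : Set.Iio o ≃o X) :
    otype X = o := by
  have key : ∀ o' : Ordinal, Nonempty (Set.Iio o' ≃o X) → o' = o := by
    rintro o' ⟨h'⟩
    have i : o'.ToType ≃o o.ToType :=
      ((Ordinal.ToType.mk (o := o')).symm.trans (h'.trans h.symm)).trans (Ordinal.ToType.mk (o := o))
    haveI i1 : IsWellOrder o'.ToType (· < ·) := isWellOrder_lt
    haveI i2 : IsWellOrder o.ToType (· < ·) := isWellOrder_lt
    have r : ((· < ·) : o'.ToType → o'.ToType → Prop) ≃r ((· < ·) : o.ToType → o.ToType → Prop) :=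
      ⟨i.toEquiv, @fun a b => i.lt_iff_lt⟩
    have h2 := Ordinal.type_eq.2 ⟨r⟩
    rwa [Ordinal.type_toType, Ordinal.type_toType] at h2
  refine le_antisymm (csInf_le' ⟨h⟩) (le_csInf ⟨o, ⟨h⟩⟩ fun b hb => (key b hb).ge)

private theorem succIt_isRegular {α : Cardinal} (h : α.IsRegular) :
    ∀ m, (succIt α m).IsRegular
  | 0 => h
  | m + 1 => Cardinal.isRegular_succ (succIt_isRegular h m).aleph0_le

private theorem le_succIt (α : Cardinal) : ∀ m, α ≤ succIt α m
  | 0 => le_rfl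
  | m + 1 => (le_succIt α m).trans (Order.le_succ _)

end AuxLemmas

private theorem cof_sSup_le_card {s : Set Ordinal} {ξ : Ordinal}
    (hlt : ∀ z ∈ s, z < sSup s) (f : Set.Iio ξ → Ordinal) (hf : Set.range f = s) :
    (sSup s).cof ≤ ξ.card := by
  let g : ξ.ToType → Ordinal := fun i => f ((Ordinal.ToType.mk (o := ξ)).symm i)
  have hrg : Set.range g = s := by
    rw [← hf]
    exact Function.Surjective.range_comp ((Ordinal.ToType.mk (o := ξ)).symm.surjective) f
  have hsup : iSup g = sSup s := by rw [← hrg]; rfl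
  have hcof := Ordinal.cof_iSup_le (f := g)
    (fun i => by rw [hsup]; exact hlt _ (hrg ▸ Set.mem_range_self i))
  rw [hsup] at hcof
  rwa [Cardinal.mk_toType] at hcof

/-- the base case of Lemma 3. -/
theorem closed_subset_of_singulars (S : GlobalSquare) (m : ℕ)
    (α : Cardinal) (hreg : α.IsRegular) (hunc : Cardinal.aleph0 < α)
    (C : Set Ordinal) (hclosed : IsClosedSet C)
    (hgt : ∀ x ∈ C, (succIt α m).ord < x)
    (hot : otype C = (succIt α m).ord + 1) :
    ∃ D : Set Ordinal, D ⊆ C ∩ {β | IsSing β} ∧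
      IsClosedSet D ∧ otype D = (succIt α m).ord + 1 := by
  classical
  set c : Cardinal := succIt α m with hcdef
  set o : Ordinal := c.ord with hodef
  have hℵlt : Cardinal.aleph0 < c := hunc.trans_le (le_succIt α m)
  have hℵ : Cardinal.aleph0 ≤ c := hℵlt.le
  have homega : Ordinal.omega0 ≤ o := Cardinal.omega0_le_ord.2 hℵ
  have holim : Order.IsSuccLimit o := Cardinal.isSuccLimit_ord hℵ
  have hoo : o < o + 1 := by rw [Ordinal.add_one_eq_succ]; exact Order.lt_succ o
  -- extract the order isomorphism between `Iio (o+1)` and `C`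
  have hSne : {o' : Ordinal | Nonempty (Set.Iio o' ≃o C)}.Nonempty := by
    by_contra h
    rw [Set.not_nonempty_iff_eq_empty] at h
    have h0 : otype C = 0 := by
      rw [otype, h]
      exact dif_neg Set.not_nonempty_empty
    rw [hot, Ordinal.add_one_eq_succ] at h0
    exact Ordinal.succ_ne_zero o h0
  have hmem : Nonempty (Set.Iio (otype C) ≃o C) := csInf_mem hSne
  rw [hot] at hmem
  obtain ⟨e⟩ := hmem
  have hle' : ∀ ξ : Set.Iio (o + 1), ξ.1 ≤ o := fun ξ =>
    Order.lt_succ_iff.1 (by rw [← Ordinal.add_one_eq_succ]; exact ξ.2)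
  have hlt1 : ∀ {a : Ordinal} (ha : a < o + 1) {y : Set.Iio (o + 1)}, a < y.1 →
      (⟨a, ha⟩ : Set.Iio (o + 1)) < y := by
    intro a ha y h
    exact Subtype.coe_lt_coe.1 h
  -- elements of `C` at limit positions are singular
  have hsing : ∀ x : Set.Iio (o + 1), Order.IsSuccLimit x.1 → IsSing ((e x : C) : Ordinal) := by
    intro x hx
    set t : Ordinal := ((e x : C) : Ordinal) with htdef
    set s : Set Ordinal := (fun y : Set.Iio (o + 1) => ((e y : C) : Ordinal)) '' {y | y < x}
      with hsdef
    have hsC : s ⊆ C := by rintro _ ⟨y, -, rfl⟩; exact (e y).2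
    have hsub : ∀ z ∈ s, z < t := by
      rintro _ ⟨y, hy, rfl⟩
      exact Subtype.coe_lt_coe.2 (e.lt_iff_lt.2 hy)
    have h0I : (0 : Ordinal) < o + 1 := lt_of_le_of_lt (show (0 : Ordinal) ≤ x.1 from zero_le) x.2
    have hsne : s.Nonempty :=
      ⟨_, ⟨⟨0, h0I⟩, show (⟨0, h0I⟩ : Set.Iio (o + 1)) ∈ {y | y < x} from hlt1 h0I hx.pos, rfl⟩⟩
    have hbdd : BddAbove s := ⟨t, fun z hz => (hsub z hz).le⟩
    have htins : sSup s ∈ C := hclosed s hsC hsne hbdd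
    have hsupt : sSup s = t := by
      refine le_antisymm (csSup_le hsne fun z hz => (hsub z hz).le) ?_
      set ζ : Set.Iio (o + 1) := e.symm ⟨sSup s, htins⟩ with hζdef
      have heζ : ((e ζ : C) : Ordinal) = sSup s := by rw [hζdef, e.apply_symm_apply]
      have hxζ : x ≤ ζ := by
        by_contra hlt
        push_neg at hlt
        have hsucc : ζ.1 + 1 < x.1 := by
          rw [Ordinal.add_one_eq_succ]
          exact hx.succ_lt (Subtype.coe_lt_coe.2 hlt)
        have h1 : ζ.1 + 1 < o + 1 := hsucc.trans x.2
        have hmem2 : ((e ⟨ζ.1 + 1, h1⟩ : C) : Ordinal) ∈ s :=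
          ⟨⟨ζ.1 + 1, h1⟩,
            show (⟨ζ.1 + 1, h1⟩ : Set.Iio (o + 1)) ∈ {y | y < x} from hlt1 h1 hsucc, rfl⟩
        have h2 : ((e ⟨ζ.1 + 1, h1⟩ : C) : Ordinal) ≤ sSup s := le_csSup hbdd hmem2
        have h3 : ((e ζ : C) : Ordinal) < ((e ⟨ζ.1 + 1, h1⟩ : C) : Ordinal) := by
          refine Subtype.coe_lt_coe.2 (e.lt_iff_lt.2 (Subtype.coe_lt_coe.1 ?_))
          show ζ.1 < ζ.1 + 1
          exact lt_of_lt_of_le (Order.lt_succ ζ.1) (le_of_eq (Ordinal.add_one_eq_succ ζ.1).symm)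
        exact absurd (h2.trans_eq heζ.symm) (not_le.2 h3)
      calc t ≤ ((e ζ : C) : Ordinal) := Subtype.coe_le_coe.2 (e.le_iff_le.2 hxζ)
        _ = sSup s := heζ
    have htlim : Order.IsSuccLimit t := by
      refine Ordinal.isSuccLimit_iff.2 ⟨?_, Order.isSuccPrelimit_of_succ_lt ?_⟩
      · intro h0
        obtain ⟨z, hz⟩ := hsne
        have hzz := hsub z hz
        rw [h0] at hzz
        exact absurd hzz (not_lt_of_ge (show (0 : Ordinal) ≤ z from zero_le))
      · intro a ha
        rw [← hsupt] at ha
        obtain ⟨z, hzs, haz⟩ := (lt_csSup_iff hbdd hsne).1 ha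
        exact lt_of_le_of_lt (Order.succ_le_of_lt haz) (hsub z hzs)
    have hcof : t.cof ≤ x.1.card := by
      rw [← hsupt]
      refine cof_sSup_le_card (fun z hz => by rw [hsupt]; exact hsub z hz)
        (fun y => ((e ⟨y.1, Set.mem_Iio.2
          (lt_trans (Set.mem_Iio.1 y.2) (Set.mem_Iio.1 x.2))⟩ : C) : Ordinal)) ?_
      apply Set.Subset.antisymm
      · rintro _ ⟨y, rfl⟩
        refine ⟨⟨y.1, Set.mem_Iio.2 (lt_trans (Set.mem_Iio.1 y.2) (Set.mem_Iio.1 x.2))⟩,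
          show _ ∈ {y' | y' < x} from hlt1 _ (Set.mem_Iio.1 y.2), rfl⟩
      · rintro _ ⟨y, hy, rfl⟩
        exact ⟨⟨y.1, Set.mem_Iio.2 (Subtype.coe_lt_coe.2 hy)⟩,
          congrArg (fun w => ((e w : C) : Ordinal)) (Subtype.ext rfl)⟩
    have hxc : x.1.card ≤ c := by
      have h5 := Ordinal.card_le_card (hle' x)
      rwa [Cardinal.card_ord] at h5
    have h1 : t.cof.ord ≤ o := Cardinal.ord_le_ord.2 (hcof.trans hxc)
    exact ⟨htlim, lt_of_le_of_lt h1 (hgt t (e x).2)⟩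
  -- auxiliary ordinal arithmetic for the order type computation
  have homulo : Ordinal.omega0 * o ≤ o := by
    rw [Ordinal.mul_le_iff_of_isSuccLimit holim]
    intro b hb
    refine le_of_lt (Cardinal.lt_ord.2 ?_)
    rw [Ordinal.card_mul, Ordinal.card_omega0]
    exact Cardinal.mul_lt_of_lt hℵ hℵlt (Cardinal.lt_ord.1 hb)
  have hmulle : ∀ ξ : Ordinal, ξ ≤ o → Ordinal.omega0 * (1 + ξ) ≤ o := by
    intro ξ hξ
    have h1 : 1 + ξ ≤ o := by
      calc 1 + ξ ≤ 1 + o := add_le_add_right hξ 1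
        _ = o := Ordinal.one_add_of_omega0_le homega
    calc Ordinal.omega0 * (1 + ξ) ≤ Ordinal.omega0 * o := mul_le_mul_right h1 _
      _ ≤ o := homulo
  have hlimmul : ∀ ξ : Set.Iio (o + 1), Order.IsSuccLimit (Ordinal.omega0 * (1 + ξ.1)) := fun ξ =>
    Ordinal.isSuccLimit_mul_left Ordinal.isSuccLimit_omega0
      (lt_of_lt_of_le zero_lt_one (show (1 : Ordinal) ≤ 1 + ξ.1 from le_self_add))
  -- the set D
  set D : Set Ordinal := (fun y : Set.Iio (o + 1) => ((e y : C) : Ordinal)) '' {y | Order.IsSuccLimit y.1}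
    with hDdef
  have hDC : D ⊆ C := by rintro _ ⟨y, -, rfl⟩; exact (e y).2
  refine ⟨D, ?_, ?_, ?_⟩
  · rintro _ ⟨y, hy, rfl⟩
    exact ⟨(e y).2, hsing y hy⟩
  · -- D is closed
    intro s hsD hsne hbdd
    have ht : sSup s ∈ C := hclosed s (fun z hz => hDC (hsD hz)) hsne hbdd
    by_cases hts : sSup s ∈ s
    · exact hsD hts
    · set ζ : Set.Iio (o + 1) := e.symm ⟨sSup s, ht⟩ with hζdef
      have heζ : ((e ζ : C) : Ordinal) = sSup s := by rw [hζdef, e.apply_symm_apply]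
      have hlts : ∀ z ∈ s, z < sSup s := fun z hz =>
        lt_of_le_of_ne (le_csSup hbdd hz) fun h => hts (h ▸ hz)
      have hzeta : ∀ z ∈ s, ∃ y : Set.Iio (o + 1), y < ζ ∧ ((e y : C) : Ordinal) = z := by
        intro z hz
        obtain ⟨y, hy, hye⟩ := hsD hz
        simp only at hye
        refine ⟨y, ?_, hye⟩
        rw [← e.lt_iff_lt, ← Subtype.coe_lt_coe, heζ, hye]
        exact hlts z hz
      have hζlim : Order.IsSuccLimit ζ.1 := by
        obtain ⟨z0, hz0⟩ := id hsne
        obtain ⟨y0, hy0, -⟩ := hzeta z0 hz0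
        refine (fun (h1 : ¬∃ a, ζ.1 = Order.succ a) (h2 : ζ.1 ≠ 0) =>
          Ordinal.isSuccLimit_iff.2 ⟨h2, Order.isSuccPrelimit_of_succ_ne fun b hb => h1 ⟨b, hb.symm⟩⟩) ?_ ?_
        · rintro ⟨a, ha⟩
          have haζ : a < ζ.1 := by rw [ha]; exact Order.lt_succ a
          have haI : a < o + 1 := haζ.trans ζ.2
          have hbound : ∀ z ∈ s, z ≤ ((e ⟨a, haI⟩ : C) : Ordinal) := by
            intro z hz
            obtain ⟨y, hy, hye⟩ := hzeta z hz
            have h1 : y.1 < Order.succ a := by rw [← ha]; exact Subtype.coe_lt_coe.2 hy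
            have h2 : y ≤ (⟨a, haI⟩ : Set.Iio (o + 1)) :=
              Subtype.coe_le_coe.1 (Order.lt_succ_iff.1 h1)
            rw [← hye]
            exact Subtype.coe_le_coe.2 (e.le_iff_le.2 h2)
          have h3 : sSup s ≤ ((e ⟨a, haI⟩ : C) : Ordinal) := csSup_le hsne hbound
          have h5 : (⟨a, haI⟩ : Set.Iio (o + 1)) < ζ := Subtype.coe_lt_coe.1 haζ
          have h4 : ((e ⟨a, haI⟩ : C) : Ordinal) < ((e ζ : C) : Ordinal) :=
            Subtype.coe_lt_coe.2 (e.lt_iff_lt.2 h5)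
          exact absurd h3 (not_le.2 (h4.trans_eq heζ))
        · intro h0
          have h1 : y0.1 < ζ.1 := Subtype.coe_lt_coe.2 hy0
          rw [h0] at h1
          exact not_lt_of_ge (show (0 : Ordinal) ≤ y0.1 from zero_le) h1
      exact ⟨ζ, hζlim, heζ⟩
  · -- the order type of D is o + 1
    let f0 : Set.Iio (o + 1) → {y : Set.Iio (o + 1) // Order.IsSuccLimit y.1} := fun ξ =>
      ⟨⟨Ordinal.omega0 * (1 + ξ.1), lt_of_le_of_lt (hmulle ξ.1 (hle' ξ)) hoo⟩, hlimmul ξ⟩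
    have hf0mono : StrictMono f0 := fun a b hab =>
      Subtype.mk_lt_mk.2 (Subtype.mk_lt_mk.2
        ((fun h => mul_lt_mul_of_pos_left h Ordinal.omega0_pos)
          ((add_lt_add_iff_left (1 : Ordinal)).2 (Subtype.coe_lt_coe.2 hab))))
    have hf0surj : Function.Surjective f0 := by
      rintro ⟨⟨l, hlI⟩, hllim⟩
      have hl : l ≠ 0 ∧ Ordinal.omega0 ∣ l := Ordinal.isSuccLimit_iff_omega0_dvd.1 hllim
      obtain ⟨q, rfl⟩ := hl.2
      have hq0 : 1 ≤ q := by
        rw [Ordinal.one_le_iff_ne_zero]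
        rintro rfl
        exact hl.1 (mul_zero _)
      have hqI : q - 1 < o + 1 := by
        have h1 : q - 1 ≤ q := Ordinal.sub_le_self q 1
        have h2 : q ≤ Ordinal.omega0 * q := Ordinal.le_mul_right q Ordinal.omega0_pos
        exact lt_of_le_of_lt (h1.trans h2) hlI
      refine ⟨⟨q - 1, hqI⟩, ?_⟩
      apply Subtype.ext
      apply Subtype.ext
      show Ordinal.omega0 * (1 + (q - 1)) = Ordinal.omega0 * q
      rw [Ordinal.add_sub_cancel_of_le hq0]
    let F0 : {y : Set.Iio (o + 1) // Order.IsSuccLimit y.1} → D := fun y =>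
      ⟨((e y.1 : C) : Ordinal), ⟨y.1, y.2, rfl⟩⟩
    have hF0mono : StrictMono F0 := fun a b hab =>
      Subtype.mk_lt_mk.2 (Subtype.coe_lt_coe.2 (e.lt_iff_lt.2 (Subtype.coe_lt_coe.2 hab)))
    have hF0surj : Function.Surjective F0 := by
      rintro ⟨z, y, hy, rfl⟩
      exact ⟨⟨y, hy⟩, rfl⟩
    have iso : Set.Iio (o + 1) ≃o D :=
      (StrictMono.orderIsoOfSurjective f0 hf0mono hf0surj).trans
        (StrictMono.orderIsoOfSurjective F0 hF0mono hF0surj)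
    exact otype_eq_of_iso iso
end

section
/- Let (C_β) be a global square sequence with associated function n, and let β be a singular limit ordinal. Then on lim(C_β) ∩ β the map γ ↦ ot(C_γ) equals γ ↦ ot(C_β ∩ γ) and is strictly increasing and continuous (it sends suprema that lie in lim(C_β) ∩ β to suprema). Consequently, if D is a closed subset of lim(C_β) ∩ β and Ē is a closed subset of {ot(C_γ) : γ ∈ D}, then D₀ = {γ ∈ D : ot(C_γ) ∈ Ē} is closed with order type equal to that of Ē; and if moreover every δ ∈ Ē is a singular limit ordinal with n(δ) ≥ k, then every γ ∈ D₀ satisfies n(γ) ≥ k+1. -/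
open Set

theorem le_self_of_strictMonoOn {a : Ordinal} {f : Ordinal → Ordinal}
    (hf : StrictMonoOn f (Set.Iio a)) : ∀ x, x < a → x ≤ f x := by
  intro x
  induction x using Ordinal.induction with
  | h x IH =>
    intro hx
    by_contra hcon
    push_neg at hcon
    exact absurd (hf (hcon.trans hx) hx hcon)
      (not_lt.2 (IH (f x) hcon (hcon.trans hx)))

theorem orderIso_Iio_apply {a b : Ordinal} (f : Set.Iio a ≃o Set.Iio b) :
    ∀ x (hx : x < a), (f ⟨x, hx⟩ : Ordinal) = x := by
  classical
  have key : ∀ {a b : Ordinal} (f : Set.Iio a ≃o Set.Iio b) (x : Ordinal) (hx : x < a),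
      x ≤ (f ⟨x, hx⟩ : Ordinal) := by
    intro a b f x hx
    have hg : StrictMonoOn (fun x => if h : x < a then (f ⟨x, h⟩ : Ordinal) else 0)
        (Set.Iio a) := by
      intro u hu v hv huv
      simp only [dif_pos (show u < a from hu), dif_pos (show v < a from hv)]
      exact Subtype.coe_lt_coe.2 (f.strictMono (Subtype.mk_lt_mk.2 huv))
    have := le_self_of_strictMonoOn hg x hx
    simpa [dif_pos hx] using this
  intro x hx
  refine le_antisymm ?_ (key f x hx)
  have h2 := key f.symm (f ⟨x, hx⟩ : Ordinal) (f ⟨x, hx⟩).2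
  have h3 : f.symm ⟨(f ⟨x, hx⟩ : Ordinal), (f ⟨x, hx⟩).2⟩ = ⟨x, hx⟩ := by
    simp
  rw [h3] at h2
  exact h2

theorem Iio_orderIso_unique {a b : Ordinal} (f : Set.Iio a ≃o Set.Iio b) : a = b := by
  rcases lt_trichotomy a b with h | h | h
  · have h1 := orderIso_Iio_apply f.symm a h
    have h2 := (f.symm ⟨a, h⟩).2
    rw [h1] at h2
    exact absurd h2 (lt_irrefl a)
  · exact h
  · have h1 := orderIso_Iio_apply f b h
    have h2 := (f ⟨b, h⟩).2
    rw [h1] at h2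
    exact absurd h2 (lt_irrefl b)

theorem otype_eq {X : Set Ordinal} {o : Ordinal} (h : Nonempty (Set.Iio o ≃o X)) :
    otype X = o := by
  have hs : {o' : Ordinal | Nonempty (Set.Iio o' ≃o X)} = {o} := by
    ext o'
    simp only [mem_setOf_eq, mem_singleton_iff]
    constructor
    · rintro ⟨g⟩
      exact Iio_orderIso_unique (g.trans h.some.symm)
    · rintro rfl; exact h
  rw [otype, hs, csInf_singleton]

theorem otype_congr {X Y : Set Ordinal} (h : Nonempty (X ≃o Y)) : otype X = otype Y := by
  unfold otype
  congr 1
  ext o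
  exact ⟨fun ⟨g⟩ => ⟨g.trans h.some⟩, fun ⟨g⟩ => ⟨g.trans h.some.symm⟩⟩

theorem exists_orderIso_of_subset_Iio {X : Set Ordinal.{u}} {b : Ordinal.{u}}
    (hX : X ⊆ Set.Iio b) : ∃ o : Ordinal.{u}, Nonempty (Set.Iio o ≃o X) := by
  classical
  let e := Ordinal.ToType.mk (o := b)
  let Y : Set b.ToType := {y | (e.symm y : Ordinal) ∈ X}
  have iso2 : X ≃o Y :=
    { toFun := fun x => ⟨e ⟨x.1, hX x.2⟩, by simp [Y]⟩
      invFun := fun y => ⟨(e.symm y.1 : Ordinal), y.2⟩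
      left_inv := fun x => by simp
      right_inv := fun y => by simp
      map_rel_iff' := by
        intro u v
        simp [Subtype.coe_le_coe] }
  let r := Subrel ((· < ·) : b.ToType → b.ToType → Prop) (· ∈ Y)
  haveI h0 : IsWellOrder b.ToType (· < ·) := isWellOrder_lt
  haveI h1 : IsWellOrder Y r := (Subrel.relEmbedding _ _).isWellOrder
  let E := Ordinal.enum r
  let g : Set.Iio (Ordinal.type r) → Y := fun x => E ⟨x.1, x.2⟩
  have hmono : StrictMono g := by
    intro u v huv
    exact E.map_rel_iff.2 huv
  have hsurj : Function.Surjective g := by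
    intro y
    exact ⟨⟨(E.symm y).1, (E.symm y).2⟩, E.apply_symm_apply y⟩
  exact ⟨Ordinal.type r,
    ⟨(StrictMono.orderIsoOfSurjective g hmono hsurj).trans iso2.symm⟩⟩

theorem lowerNoMax_eq_Iio {A : Set Ordinal} (hne : A.Nonempty) (hbdd : BddAbove A)
    (hlow : ∀ i ∈ A, ∀ j < i, j ∈ A) (hnomax : ∀ i ∈ A, ∃ j ∈ A, i < j) :
    A = Set.Iio (sSup A) := by
  ext i
  constructor
  · intro hi
    rcases hnomax i hi with ⟨j, hj, hij⟩
    exact lt_of_lt_of_le hij (le_csSup hbdd hj)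
  · intro hi
    rcases (lt_csSup_iff hbdd hne).1 hi with ⟨j, hj, hij⟩
    exact hlow j hj i hij

/-- `γ ↦ ot (C γ)` is strictly increasing and continuous
on the limit points of `C β`, and its effect on closed sets and on `n`. -/
theorem otype_strictMono_continuous_on_limPts (S : GlobalSquare)
    (ν : Ordinal → ℕ) (hν : IsAssocFn S ν)
    (β : Ordinal) (hβ : IsSing β) :
    (∀ γ ∈ limPts (S.C β) ∩ Set.Iio β,
      otype (S.C γ) = otype (S.C β ∩ Set.Iio γ)) ∧
    StrictMonoOn (fun γ => otype (S.C γ)) (limPts (S.C β) ∩ Set.Iio β) ∧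
    (∀ s : Set Ordinal, s ⊆ limPts (S.C β) ∩ Set.Iio β → s.Nonempty →
      sSup s ∈ limPts (S.C β) ∩ Set.Iio β →
      otype (S.C (sSup s)) = sSup ((fun γ => otype (S.C γ)) '' s)) ∧
    ∀ D : Set Ordinal, D ⊆ limPts (S.C β) ∩ Set.Iio β → IsClosedSet D →
      ∀ E : Set Ordinal, E ⊆ (fun γ => otype (S.C γ)) '' D → IsClosedSet E →
        IsClosedSet {γ ∈ D | otype (S.C γ) ∈ E} ∧
        otype {γ ∈ D | otype (S.C γ) ∈ E} = otype E ∧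
        ∀ k : ℕ, (∀ δ ∈ E, IsSing δ ∧ k ≤ ν δ) →
          ∀ γ ∈ {γ ∈ D | otype (S.C γ) ∈ E}, k + 1 ≤ ν γ := by
  classical
  obtain ⟨hCsub, hCcl, hCunb⟩ := S.club β hβ
  obtain ⟨o, ⟨e⟩⟩ := exists_orderIso_of_subset_Iio hCsub
  set A : Ordinal → Set Ordinal :=
    fun γ => {i : Ordinal | ∃ h : i ∈ Set.Iio o, ((e ⟨i, h⟩ : S.C β) : Ordinal) < γ} with hA
  set c : Ordinal → Ordinal := fun γ => sSup (A γ) with hc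
  have hAbdd : ∀ γ, BddAbove (A γ) := fun γ => ⟨o, fun i hi => le_of_lt hi.choose⟩
  have hInterBdd : ∀ γ : Ordinal, BddAbove (S.C β ∩ Set.Iio γ) :=
    fun γ => ⟨γ, fun x hx => le_of_lt hx.2⟩
  have memA : ∀ γ x (hx : x ∈ S.C β), x < γ →
      ((e.symm ⟨x, hx⟩ : Set.Iio o) : Ordinal) ∈ A γ := by
    intro γ x hx hxγ
    refine ⟨(e.symm ⟨x, hx⟩).2, ?_⟩
    have : (⟨((e.symm ⟨x, hx⟩ : Set.Iio o) : Ordinal), (e.symm ⟨x, hx⟩).2⟩ : Set.Iio o)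
        = e.symm ⟨x, hx⟩ := rfl
    rw [this, e.apply_symm_apply]
    exact hxγ
  have hne : ∀ γ ∈ limPts (S.C β), (S.C β ∩ Set.Iio γ).Nonempty := by
    intro γ hγ
    by_contra h
    rw [Set.not_nonempty_iff_eq_empty] at h
    have h0 := hγ.2
    rw [h, csSup_empty] at h0
    exact absurd h0.symm (ne_of_gt hγ.1.pos)
  have hAne : ∀ γ ∈ limPts (S.C β), (A γ).Nonempty := by
    intro γ hγ
    obtain ⟨x, hx1, hx2⟩ := hne γ hγ
    exact ⟨_, memA γ x hx1 hx2⟩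
  have hAIio : ∀ γ ∈ limPts (S.C β), A γ = Set.Iio (c γ) := by
    intro γ hγ
    refine lowerNoMax_eq_Iio (hAne γ hγ) (hAbdd γ) ?_ ?_
    · rintro i ⟨h, hlt⟩ j hji
      have hj : j ∈ Set.Iio o := lt_trans hji h
      refine ⟨hj, lt_trans ?_ hlt⟩
      exact Subtype.coe_lt_coe.2 (e.strictMono (Subtype.mk_lt_mk.2 hji))
    · rintro i ⟨h, hlt⟩
      rw [← hγ.2] at hlt
      obtain ⟨x, hx, hix⟩ := (lt_csSup_iff (hInterBdd γ) (hne γ hγ)).1 hlt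
      refine ⟨_, memA γ x hx.1 hx.2, ?_⟩
      have hix' : (e ⟨i, h⟩ : Ordinal) < ((e (e.symm ⟨x, hx.1⟩) : S.C β) : Ordinal) := by
        rw [e.apply_symm_apply]; exact hix
      have := e.strictMono.lt_iff_lt.1 (Subtype.coe_lt_coe.1 hix')
      exact Subtype.mk_lt_mk.1 this
  have hclt : ∀ γ ∈ limPts (S.C β), γ < β → c γ < o := by
    intro γ hγ hγβ
    obtain ⟨x, hx, hγx⟩ := hCunb γ hγβ
    have hub : c γ ≤ ((e.symm ⟨x, hx⟩ : Set.Iio o) : Ordinal) := by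
      apply csSup_le (hAne γ hγ)
      rintro i ⟨h, hlt⟩
      have hix' : (e ⟨i, h⟩ : Ordinal) < ((e (e.symm ⟨x, hx⟩) : S.C β) : Ordinal) := by
        rw [e.apply_symm_apply]; exact lt_trans hlt hγx
      have := e.strictMono.lt_iff_lt.1 (Subtype.coe_lt_coe.1 hix')
      exact le_of_lt (Subtype.mk_lt_mk.1 this)
    exact lt_of_le_of_lt hub (e.symm ⟨x, hx⟩).2
  have hotype : ∀ γ ∈ limPts (S.C β), γ < β → otype (S.C β ∩ Set.Iio γ) = c γ := by
    intro γ hγ hγβ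
    have hco : c γ < o := hclt γ hγ hγβ
    have hmemA : ∀ i : Set.Iio (c γ), (i : Ordinal) ∈ A γ := by
      intro i
      rw [hAIio γ hγ]; exact i.2
    let g : Set.Iio (c γ) → ↥(S.C β ∩ Set.Iio γ) := fun i =>
      ⟨((e ⟨i.1, lt_trans i.2 hco⟩ : S.C β) : Ordinal),
        (e ⟨i.1, lt_trans i.2 hco⟩).2, by
          obtain ⟨h, hlt⟩ := hmemA i
          exact hlt⟩
    have hgmono : StrictMono g := by
      intro u v huv
      exact Subtype.mk_lt_mk.2
        (Subtype.coe_lt_coe.2 (e.strictMono (Subtype.mk_lt_mk.2 (Subtype.coe_lt_coe.2 huv))))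
    have hgsurj : Function.Surjective g := by
      rintro ⟨y, hy1, hy2⟩
      have hj : ((e.symm ⟨y, hy1⟩ : Set.Iio o) : Ordinal) ∈ A γ := memA γ y hy1 hy2
      rw [hAIio γ hγ] at hj
      refine ⟨⟨_, hj⟩, ?_⟩
      apply Subtype.ext
      show ((e ⟨(e.symm ⟨y, hy1⟩ : Set.Iio o).1, _⟩ : S.C β) : Ordinal) = y
      have : (⟨(e.symm ⟨y, hy1⟩ : Set.Iio o).1, lt_trans hj hco⟩ : Set.Iio o)
          = e.symm ⟨y, hy1⟩ := rfl
      rw [this, e.apply_symm_apply]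
    exact otype_eq ⟨StrictMono.orderIsoOfSurjective g hgmono hgsurj⟩
  have key1 : ∀ γ ∈ limPts (S.C β) ∩ Set.Iio β,
      otype (S.C γ) = otype (S.C β ∩ Set.Iio γ) := by
    intro γ hγ
    rw [(S.coh β hβ γ hγ.1 hγ.2).2]
  have key1' : ∀ γ ∈ limPts (S.C β) ∩ Set.Iio β, otype (S.C γ) = c γ := by
    intro γ hγ
    rw [key1 γ hγ, hotype γ hγ.1 hγ.2]
  have hcmono : ∀ γ ∈ limPts (S.C β) ∩ Set.Iio β, ∀ γ' ∈ limPts (S.C β) ∩ Set.Iio β,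
      γ < γ' → c γ < c γ' := by
    intro γ hγ γ' hγ' hlt
    have h2 := hγ'.1.2
    have : γ < sSup (S.C β ∩ Set.Iio γ') := by rw [h2]; exact hlt
    obtain ⟨x, hx, hγx⟩ := (lt_csSup_iff (hInterBdd γ') (hne γ' hγ'.1)).1 this
    have hj : ((e.symm ⟨x, hx.1⟩ : Set.Iio o) : Ordinal) ∈ A γ' := memA γ' x hx.1 hx.2
    rw [hAIio γ' hγ'.1] at hj
    refine lt_of_le_of_lt ?_ hj
    apply csSup_le (hAne γ hγ.1)
    rintro i ⟨h, hilt⟩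
    have hix' : (e ⟨i, h⟩ : Ordinal) < ((e (e.symm ⟨x, hx.1⟩) : S.C β) : Ordinal) := by
      rw [e.apply_symm_apply]; exact lt_trans hilt hγx
    have := e.strictMono.lt_iff_lt.1 (Subtype.coe_lt_coe.1 hix')
    exact le_of_lt (Subtype.mk_lt_mk.1 this)
  have key2 : StrictMonoOn (fun γ => otype (S.C γ)) (limPts (S.C β) ∩ Set.Iio β) := by
    intro γ hγ γ' hγ' hlt
    simp only
    rw [key1' γ hγ, key1' γ' hγ']
    exact hcmono γ hγ γ' hγ' hlt
  have keyle : ∀ γ ∈ limPts (S.C β) ∩ Set.Iio β, ∀ γ' ∈ limPts (S.C β) ∩ Set.Iio β,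
      γ ≤ γ' → otype (S.C γ) ≤ otype (S.C γ') := by
    intro γ hγ γ' hγ' hle
    rcases eq_or_lt_of_le hle with rfl | h
    · exact le_rfl
    · exact le_of_lt (key2 hγ hγ' h)
  have key3 : ∀ s : Set Ordinal, s ⊆ limPts (S.C β) ∩ Set.Iio β → s.Nonempty →
      sSup s ∈ limPts (S.C β) ∩ Set.Iio β →
      otype (S.C (sSup s)) = sSup ((fun γ => otype (S.C γ)) '' s) := by
    intro s hs hsne hσ
    have hsbdd : BddAbove s := ⟨β, fun γ hγ => le_of_lt (hs hγ).2⟩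
    have himg : (fun γ => otype (S.C γ)) '' s = c '' s :=
      Set.image_congr fun γ hγ => key1' γ (hs hγ)
    have himgbdd : BddAbove (c '' s) := by
      refine ⟨o, ?_⟩
      rintro _ ⟨γ, hγ, rfl⟩
      exact le_of_lt (hclt γ (hs hγ).1 (hs hγ).2)
    rw [key1' _ hσ, himg]
    apply le_antisymm
    · apply csSup_le (hAne _ hσ.1)
      rintro i ⟨h, hilt⟩
      obtain ⟨γ, hγs, hγlt⟩ := (lt_csSup_iff hsbdd hsne).1 hilt
      have : i ∈ A γ := ⟨h, hγlt⟩
      rw [hAIio γ (hs hγs).1] at this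
      exact le_of_lt (lt_of_lt_of_le this (le_csSup himgbdd (Set.mem_image_of_mem c hγs)))
    · apply csSup_le (hsne.image c)
      rintro _ ⟨γ, hγs, rfl⟩
      rcases eq_or_lt_of_le (le_csSup hsbdd hγs) with heq | hlt
      · rw [heq]
      · exact le_of_lt (hcmono γ (hs hγs) (sSup s) hσ hlt)
  refine ⟨key1, key2, key3, ?_⟩
  intro D hD hDcl E hE hEcl
  have hD0sub : {γ ∈ D | otype (S.C γ) ∈ E} ⊆ D := fun γ hγ => hγ.1
  have hD0sub' : {γ ∈ D | otype (S.C γ) ∈ E} ⊆ limPts (S.C β) ∩ Set.Iio β :=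
    fun γ hγ => hD (hγ.1)
  have hfD0 : (fun γ => otype (S.C γ)) '' {γ ∈ D | otype (S.C γ) ∈ E} = E := by
    apply Set.Subset.antisymm
    · rintro _ ⟨γ, hγ, rfl⟩
      exact hγ.2
    · intro δ hδ
      obtain ⟨γ, hγD, hγδ⟩ := hE hδ
      exact ⟨γ, ⟨hγD, by show (fun γ => otype (S.C γ)) γ ∈ E; rw [hγδ]; exact hδ⟩, hγδ⟩
  refine ⟨?_, ?_, ?_⟩
  · -- closedness
    intro s hs hsne hsbdd
    have hsD : s ⊆ D := fun x hx => (hs hx).1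
    have hσD : sSup s ∈ D := hDcl s hsD hsne hsbdd
    have hσ : sSup s ∈ limPts (S.C β) ∩ Set.Iio β := hD hσD
    refine ⟨hσD, ?_⟩
    have hcont := key3 s (fun x hx => hD (hsD hx)) hsne hσ
    rw [hcont]
    apply hEcl
    · rintro _ ⟨γ, hγ, rfl⟩
      exact (hs hγ).2
    · exact hsne.image _
    · refine ⟨otype (S.C (sSup s)), ?_⟩
      rintro _ ⟨γ, hγ, rfl⟩
      exact keyle γ (hD (hsD hγ)) (sSup s) hσ (le_csSup hsbdd hγ)
  · -- order type
    have hiso := StrictMonoOn.orderIso (fun γ => otype (S.C γ))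
      {γ ∈ D | otype (S.C γ) ∈ E} (key2.mono hD0sub')
    exact otype_congr ⟨hiso.trans (OrderIso.setCongr _ _ hfD0)⟩
  · -- n-values
    intro k hk γ hγ
    have hmem := hD hγ.1
    obtain ⟨hsing, -⟩ := S.coh β hβ γ hmem.1 hmem.2
    have hδ := hk _ hγ.2
    rw [hν γ hsing, if_pos hδ.1]
    exact Nat.succ_le_succ hδ.2
end

section
/- Let (C_β) be a global square sequence with associated function n. For every natural number k, every closed unbounded class C of ordinals, and all ordinals δ and η, the class C ∩ {β : β is a singular limit ordinal and n(β) ≥ k} contains a closed subset of order type at least δ all of whose elements are greater than η. -/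
open Set

open Order

universe u
namespace SqAux
open Ordinal

/-- sSup of a nonempty bounded set not containing its sup is a limit ordinal. -/
lemma isLimit_sSup_of_not_mem {s : Set Ordinal.{u}} (hne : s.Nonempty) (hb : BddAbove s)
    (h : sSup s ∉ s) : IsSuccLimit (sSup s) := by
  rcases Ordinal.zero_or_succ_or_isSuccLimit (sSup s) with h0 | ⟨q, hq⟩ | hl
  · obtain ⟨x, hx⟩ := hne
    have : x ≤ sSup s := le_csSup hb hx
    rw [h0, nonpos_iff_eq_zero] at this
    exact absurd (h0 ▸ this ▸ hx) h
  · obtain ⟨x, hx, hqx⟩ := exists_lt_of_lt_csSup hne (by rw [← hq]; exact Order.lt_succ q)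
    have hxle : x ≤ sSup s := le_csSup hb hx
    have : x = sSup s := le_antisymm hxle (by rw [← hq]; exact Order.succ_le_of_lt hqx)
    exact absurd (this ▸ hx) h
  · exact hl

lemma map_Iio_sSup {f : Ordinal.{u} → Ordinal.{u}} (hf : IsNormal f) {ξ : Ordinal.{u}} (hξ : IsSuccLimit ξ) :
    f ξ = sSup (f '' Iio ξ) := by
  have hbdd : BddAbove (f '' Iio ξ) := ⟨f ξ, by rintro _ ⟨b, hb, rfl⟩; exact (hf.strictMono hb).le⟩
  refine le_antisymm ?_ (csSup_le (by exact ⟨f 0, ⟨0, hξ.pos, rfl⟩⟩) ?_)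
  · exact (hf.le_iff_forall_le hξ).2 fun b hb => le_csSup hbdd ⟨b, hb, rfl⟩
  · rintro _ ⟨b, hb, rfl⟩; exact (hf.strictMono hb).le

lemma map_sSup {f : Ordinal.{u} → Ordinal.{u}} (hf : IsNormal f) {t : Set Ordinal.{u}} (hne : t.Nonempty)
    (hb : BddAbove t) : sSup (f '' t) = f (sSup t) := by
  by_cases hmem : sSup t ∈ t
  · refine IsGreatest.csSup_eq ⟨⟨_, hmem, rfl⟩, ?_⟩
    rintro _ ⟨b, hbt, rfl⟩
    exact hf.strictMono.monotone (le_csSup hb hbt)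
  · have hlim : IsSuccLimit (sSup t) := isLimit_sSup_of_not_mem hne hb hmem
    have hbdd : BddAbove (f '' t) :=
      ⟨f (sSup t), by rintro _ ⟨b, hbt, rfl⟩; exact hf.strictMono.monotone (le_csSup hb hbt)⟩
    refine le_antisymm (csSup_le (hne.image f) ?_) ?_
    · rintro _ ⟨b, hbt, rfl⟩
      exact hf.strictMono.monotone (le_csSup hb hbt)
    · rw [map_Iio_sSup hf hlim]
      refine csSup_le (⟨f 0, ⟨0, hlim.pos, rfl⟩⟩) ?_
      rintro _ ⟨b, hblt, rfl⟩
      obtain ⟨x, hxt, hbx⟩ := exists_lt_of_lt_csSup hne hblt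
      exact (hf.strictMono hbx).le.trans (le_csSup hbdd ⟨x, hxt, rfl⟩)

lemma isClosedSet_image {f : Ordinal.{u} → Ordinal.{u}} (hf : IsNormal f) {E : Set Ordinal.{u}}
    (hE : IsClosedSet E) : IsClosedSet (f '' E) := by
  intro s hs hne hb
  set t : Set Ordinal := E ∩ f ⁻¹' s with ht
  have hst : s = f '' t := by
    apply Subset.antisymm
    · intro x hx
      obtain ⟨b, hbE, rfl⟩ := hs hx
      exact ⟨b, ⟨hbE, hx⟩, rfl⟩
    · rintro _ ⟨b, ⟨_, hbs⟩, rfl⟩; exact hbs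
  have htne : t.Nonempty := by
    obtain ⟨x, hx⟩ := hne
    obtain ⟨b, hbE, rfl⟩ := hs hx
    exact ⟨b, hbE, hx⟩
  have htb : BddAbove t := by
    obtain ⟨B, hB⟩ := hb
    refine ⟨B, fun x hx => ?_⟩
    exact le_trans hf.strictMono.le_apply (hB hx.2)
  have : sSup t ∈ E := hE t inter_subset_left htne htb
  rw [hst, map_sSup hf htne htb]
  exact ⟨_, this, rfl⟩

lemma Iio_orderIso_inj {o o' : Ordinal.{u}} (φ : Iio o ≃o Iio o') : o = o' := by
  have ψ : o.ToType ≃o o'.ToType := ToType.mk.symm.trans (φ.trans ToType.mk)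
  have h : @Ordinal.type o.ToType (· < ·) isWellOrder_lt
      = @Ordinal.type o'.ToType (· < ·) isWellOrder_lt :=
    @RelIso.ordinal_type_eq _ _ _ _ isWellOrder_lt isWellOrder_lt ψ.toRelIsoLT
  rwa [show @Ordinal.type o.ToType (· < ·) isWellOrder_lt = o from type_toType o,
    show @Ordinal.type o'.ToType (· < ·) isWellOrder_lt = o' from type_toType o'] at h

lemma otype_eq {X : Set Ordinal.{u}} {o : Ordinal.{u}} (h : Iio o ≃o X) : otype X = o := by
  have : {o' : Ordinal | Nonempty (Iio o' ≃o X)} = {o} := by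
    ext o'
    simp only [mem_setOf_eq, mem_singleton_iff]
    constructor
    · rintro ⟨ψ⟩; exact Iio_orderIso_inj (ψ.trans h.symm)
    · rintro rfl; exact ⟨h⟩
  rw [otype, this, csInf_singleton]

lemma otype_Iio (o : Ordinal.{u}) : otype (Iio o) = o := otype_eq (OrderIso.refl _)

lemma otype_image {f : Ordinal.{u} → Ordinal.{u}} (hf : StrictMono f) (E : Set Ordinal.{u}) :
    otype (f '' E) = otype E := by
  have : {o : Ordinal | Nonempty (Iio o ≃o (f '' E))} = {o : Ordinal | Nonempty (Iio o ≃o E)} := by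
    ext o
    have iso : E ≃o (f '' E) := StrictMonoOn.orderIso f E (hf.strictMonoOn E)
    exact ⟨fun ⟨ψ⟩ => ⟨ψ.trans iso.symm⟩, fun ⟨ψ⟩ => ⟨ψ.trans iso⟩⟩
  rw [otype, otype, this]

end SqAux

namespace SqAux
open Ordinal

variable {lam : Ordinal.{u}} {c : Set Ordinal.{u}}

/-- The extension of a club in `lam` to an unbounded class of ordinals. -/
def cext (c : Set Ordinal.{u}) (lam : Ordinal.{u}) : Set Ordinal.{u} := c ∪ Ici lam

lemma cext_not_bddAbove : ¬ BddAbove (cext c lam) := by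
  rintro ⟨b, hb⟩
  have h1 : lam ≤ b := hb (mem_union_right _ (mem_Ici.2 le_rfl))
  have h2 : b + 1 ≤ b := hb (mem_union_right _ (mem_Ici.2 (h1.trans (le_of_lt (lt_add_one b)))))
  exact absurd h2 (by simp)

lemma cext_isClosed (hc : IsClubIn c lam) : IsClosed (cext c lam) := by
  rw [isClosed_iff_iSup]
  intro ι hι g hg
  rcases le_or_gt lam (⨆ i, g i) with h | h
  · exact mem_union_right _ h
  · left
    have hsup : (⨆ i, g i) = sSup (range g) := rfl
    have hmem : ∀ i, g i ∈ c := by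
      intro i
      rcases hg i with h' | h'
      · exact h'
      · exact absurd (lt_of_le_of_lt (le_ciSup (Ordinal.bddAbove_range g) i) h) (not_lt.2 h')
    have := hc.2.1 (range g) (by rintro _ ⟨i, rfl⟩; exact hmem i) (range_nonempty g)
      (by rw [← hsup]; exact h)
    rwa [← hsup] at this

lemma cext_isNormal (hc : IsClubIn c lam) : IsNormal (enumOrd (cext c lam)) :=
  (enumOrd_isNormal_iff_isClosed cext_not_bddAbove).2 (cext_isClosed hc)

lemma cext_mem_c (hc : IsClubIn c lam) {ι : Ordinal.{u}} (h : enumOrd (cext c lam) ι < lam) :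
    enumOrd (cext c lam) ι ∈ c := by
  rcases enumOrd_mem cext_not_bddAbove ι with h' | h'
  · exact h'
  · exact absurd h (not_lt.2 h')

lemma enum_lt_lam (hc : IsClubIn c lam) {ι : Ordinal.{u}} (hcard : ι.card < lam.cof) :
    enumOrd (cext c lam) ι < lam := by
  have hlam0 : 0 < lam := by
    by_contra h0
    push_neg at h0
    rw [nonpos_iff_eq_zero] at h0
    rw [h0, cof_zero] at hcard
    exact absurd hcard (by simp)
  induction ι using Ordinal.induction with
  | h ι IH =>
    rcases Ordinal.zero_or_succ_or_isSuccLimit ι with rfl | ⟨q, rfl⟩ | hlim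
    · obtain ⟨x, hx, -⟩ := hc.2.2 0 hlam0
      rw [enumOrd_zero]
      exact lt_of_le_of_lt (csInf_le' (mem_union_left _ hx)) (hc.1 hx)
    · have hq : enumOrd (cext c lam) q < lam :=
        IH q (lt_succ q) ((Ordinal.card_le_card (le_of_lt (lt_succ q))).trans_lt hcard)
      obtain ⟨y, hy, hqy⟩ := hc.2.2 _ hq
      exact lt_of_le_of_lt
        (enumOrd_succ_le cext_not_bddAbove (mem_union_left _ hy) hqy) (hc.1 hy)
    · rw [map_Iio_sSup (cext_isNormal hc) hlim]
      set e : Iio ι ≃o ι.ToType := ToType.mk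
      have hrange : (enumOrd (cext c lam)) '' (Iio ι)
          = range (fun x : ι.ToType => enumOrd (cext c lam) (e.symm x).1) := by
        ext z
        constructor
        · rintro ⟨b, hb, rfl⟩
          exact ⟨e ⟨b, hb⟩, by simp⟩
        · rintro ⟨x, rfl⟩
          exact ⟨(e.symm x).1, (e.symm x).2, rfl⟩
      rw [hrange]
      have : (⨆ x : ι.ToType, enumOrd (cext c lam) (e.symm x).1) < lam := by
        apply iSup_lt_ord
        · rwa [Cardinal.mk_toType]
        · intro x
          exact IH _ (e.symm x).2 ((Ordinal.card_le_card (le_of_lt (e.symm x).2)).trans_lt hcard)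
      exact this

lemma enum_limit_mem_limPts (hc : IsClubIn c lam) {ι : Ordinal.{u}} (hι : IsSuccLimit ι)
    (hlt : enumOrd (cext c lam) ι < lam) : enumOrd (cext c lam) ι ∈ limPts c := by
  set F := enumOrd (cext c lam) with hF
  have hnorm : IsNormal F := cext_isNormal hc
  have hmem : ∀ j < ι, F j ∈ c ∩ Iio (F ι) := by
    intro j hj
    have h1 : F j < F ι := hnorm.strictMono hj
    exact ⟨cext_mem_c hc (h1.trans hlt), h1⟩
  have hne : (c ∩ Iio (F ι)).Nonempty := ⟨F 0, hmem 0 hι.pos⟩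
  refine ⟨hnorm.map_isSuccLimit hι, le_antisymm (csSup_le hne fun x hx => hx.2.le) ?_⟩
  have key : F ι = sSup (F '' Iio ι) := map_Iio_sSup hnorm hι
  refine key.le.trans (csSup_le ⟨F 0, ⟨0, hι.pos, rfl⟩⟩ ?_)
  rintro _ ⟨j, hj, rfl⟩
  exact le_csSup ⟨F ι, fun x hx => hx.2.le⟩ (hmem j hj)

/-- Position of `lam` in the enumeration of `cext c lam`; basic structure of clubs. -/
lemma club_position (hc : IsClubIn c lam) (hlam : IsSuccLimit lam) :
    ∃ p : Ordinal.{u}, IsSuccLimit p ∧ enumOrd (cext c lam) p = lam ∧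
      (∀ j, j < p ↔ enumOrd (cext c lam) j < lam) ∧
      (enumOrd (cext c lam)) '' (Iio p) = c ∧ otype c = p ∧ p.cof = lam.cof := by
  set F := enumOrd (cext c lam) with hF
  have hnorm : IsNormal F := cext_isNormal hc
  have hne : {ι : Ordinal | lam ≤ F ι}.Nonempty := ⟨lam, hnorm.strictMono.le_apply⟩
  set p := sInf {ι : Ordinal | lam ≤ F ι} with hp
  have hlamp : lam ≤ F p := csInf_mem hne
  have hlt : ∀ j < p, F j < lam := by
    intro j hj
    by_contra h
    exact absurd (csInf_le' (show j ∈ {ι : Ordinal | lam ≤ F ι} from not_lt.1 h)) (not_le.2 hj)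
  have hFp : F p = lam := by
    obtain ⟨q, hq⟩ := enumOrd_surjective cext_not_bddAbove (mem_union_right _ (le_refl lam))
    have hpq : p ≤ q := csInf_le' (show q ∈ {ι : Ordinal | lam ≤ F ι} from hq.ge)
    exact le_antisymm (hq ▸ hnorm.strictMono.monotone hpq) hlamp
  have hiff : ∀ j, j < p ↔ F j < lam := by
    intro j
    refine ⟨hlt j, fun h => ?_⟩
    by_contra h'
    exact absurd (hFp ▸ hnorm.strictMono.monotone (not_lt.1 h')) (not_le.2 h)
  have hplim : IsSuccLimit p := by
    rcases Ordinal.zero_or_succ_or_isSuccLimit p with h0 | ⟨q, hq⟩ | h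
    · obtain ⟨x, hx, -⟩ := hc.2.2 0 hlam.pos
      have : F 0 < lam := lt_of_le_of_lt (by rw [hF, enumOrd_zero]; exact csInf_le' (mem_union_left _ hx)) (hc.1 hx)
      rw [← h0, hFp] at this
      exact absurd this (lt_irrefl lam)
    · have hq' : F q < lam := hlt q (by rw [← hq]; exact lt_succ q)
      obtain ⟨y, hy, hqy⟩ := hc.2.2 _ hq'
      have : F p ≤ y := by
        rw [← hq]; exact enumOrd_succ_le cext_not_bddAbove (mem_union_left _ hy) hqy
      rw [hFp] at this
      exact absurd (this.trans_lt (hc.1 hy)) (lt_irrefl lam)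
    · exact h
  have himg : F '' (Iio p) = c := by
    ext x
    constructor
    · rintro ⟨j, hj, rfl⟩
      exact cext_mem_c hc (hlt j hj)
    · intro hx
      obtain ⟨q, hq⟩ := enumOrd_surjective cext_not_bddAbove (mem_union_left _ hx)
      exact ⟨q, (hiff q).2 (by rw [show F q = x from hq]; exact hc.1 hx), hq⟩
  have hot : otype c = p := by
    have h1 := otype_image hnorm.strictMono (Iio p)
    rw [himg, otype_Iio] at h1
    exact h1
  exact ⟨p, hplim, hFp, hiff, himg, hot, by conv_rhs => rw [← hFp, cof_map_of_isNormal hnorm hplim]⟩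

/-- A limit point of `c` below `lam` is the image of a limit index. -/
lemma limPts_index (hc : IsClubIn c lam) {p : Ordinal.{u}}
    (hiff : ∀ j, j < p ↔ enumOrd (cext c lam) j < lam)
    (himg : (enumOrd (cext c lam)) '' (Iio p) = c)
    {γ : Ordinal.{u}} (hγ : γ ∈ limPts c) (hγl : γ < lam) :
    ∃ j, j < p ∧ IsSuccLimit j ∧ enumOrd (cext c lam) j = γ := by
  set F := enumOrd (cext c lam) with hF
  have hnorm : IsNormal F := cext_isNormal hc
  have hne : (c ∩ Iio γ).Nonempty := by
    rcases (c ∩ Iio γ).eq_empty_or_nonempty with h | h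
    · have h2 := hγ.2
      rw [h, csSup_empty] at h2
      exact absurd h2.symm (by simpa using hγ.1.pos.ne')
    · exact h
  have hγc : γ ∈ c := by
    have := hc.2.1 (c ∩ Iio γ) inter_subset_left hne (by rw [hγ.2]; exact hγl)
    rwa [hγ.2] at this
  obtain ⟨j, hj, hFj⟩ := by rw [← himg] at hγc; exact hγc
  refine ⟨j, hj, ?_, hFj⟩
  rcases Ordinal.zero_or_succ_or_isSuccLimit j with rfl | ⟨q, rfl⟩ | h
  · exfalso
    have : c ∩ Iio γ = ∅ := by
      ext x
      simp only [mem_inter_iff, mem_Iio, mem_empty_iff_false, iff_false, not_and]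
      intro hx hlt'
      obtain ⟨r, hr, hFr⟩ := by rw [← himg] at hx; exact hx
      rw [← hFj, ← hFr] at hlt'
      exact absurd (hnorm.strictMono.lt_iff_lt.1 hlt') (not_lt_of_ge (zero_le (a := r)))
    have h2 := hγ.2
    rw [this, csSup_empty] at h2
    exact absurd h2.symm (by simpa using hγ.1.pos.ne')
  · exfalso
    have hub : ∀ x ∈ c ∩ Iio γ, x ≤ F q := by
      rintro x ⟨hx, hlt'⟩
      obtain ⟨r, hr, hFr⟩ := by rw [← himg] at hx; exact hx
      rw [← hFj, ← hFr] at hlt'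
      have : r < succ q := hnorm.strictMono.lt_iff_lt.1 hlt'
      rw [← hFr]
      exact hnorm.strictMono.monotone (le_of_lt_succ this)
    have h1 : γ ≤ F q := hγ.2 ▸ csSup_le hne hub
    have h2 : F q < γ := by rw [← hFj]; exact hnorm.strictMono (lt_succ q)
    exact absurd (h1.trans_lt h2) (lt_irrefl γ)
  · exact h

end SqAux

namespace SqAux
open Ordinal

lemma limPts_inter_Ioi {c : Set Ordinal.{u}} {η γ : Ordinal.{u}}
    (hγ : γ ∈ limPts (c ∩ Ioi η)) : γ ∈ limPts c ∧ η < γ := by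
  have hne : ((c ∩ Ioi η) ∩ Iio γ).Nonempty := by
    rcases ((c ∩ Ioi η) ∩ Iio γ).eq_empty_or_nonempty with h | h
    · have h2 := hγ.2
      rw [h, csSup_empty] at h2
      exact absurd h2.symm (by simpa using hγ.1.pos.ne')
    · exact h
  obtain ⟨x, ⟨⟨hxc, hxη⟩, hxγ⟩⟩ := id hne
  refine ⟨⟨hγ.1, le_antisymm (csSup_le ⟨x, hxc, hxγ⟩ ?_) ?_⟩, hxη.trans hxγ⟩
  · exact fun z hz => hz.2.le
  · calc γ = sSup ((c ∩ Ioi η) ∩ Iio γ) := hγ.2.symm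
      _ ≤ sSup (c ∩ Iio γ) := csSup_le_csSup ⟨γ, fun z hz => hz.2.le⟩ hne
          (fun z hz => ⟨hz.1.1, hz.2⟩)

lemma isClosedSet_limPts (X : Set Ordinal.{u}) : IsClosedSet (limPts X) := by
  intro s hs hne hb
  by_cases hmem : sSup s ∈ s
  · exact hs hmem
  · have hlim : IsSuccLimit (sSup s) := isLimit_sSup_of_not_mem hne hb hmem
    set σ := sSup s with hσ
    have hsub : ∀ u ∈ s, X ∩ Iio u ⊆ X ∩ Iio σ := by
      intro u hu z hz
      exact ⟨hz.1, hz.2.trans_le (le_csSup hb hu)⟩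
    obtain ⟨u, hu⟩ := id hne
    have huX : (X ∩ Iio u).Nonempty := by
      rcases (X ∩ Iio u).eq_empty_or_nonempty with h | h
      · have h2 := (hs hu).2
        rw [h, csSup_empty] at h2
        exact absurd h2.symm (by simpa using (hs hu).1.pos.ne')
      · exact h
    have hXne : (X ∩ Iio σ).Nonempty := huX.mono (hsub u hu)
    have hbX : BddAbove (X ∩ Iio σ) := ⟨σ, fun z hz => hz.2.le⟩
    refine ⟨hlim, le_antisymm (csSup_le hXne fun z hz => hz.2.le) (csSup_le hne ?_)⟩
    intro u hu
    calc u = sSup (X ∩ Iio u) := (hs hu).2.symm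
      _ ≤ sSup (X ∩ Iio σ) := csSup_le_csSup hbX (by
          rcases (X ∩ Iio u).eq_empty_or_nonempty with h | h
          · have h2 := (hs hu).2
            rw [h, csSup_empty] at h2
            exact absurd h2.symm (by simpa using (hs hu).1.pos.ne')
          · exact h) (hsub u hu)

/-- Interleaving: common limit points of two sets unbounded below `β`. -/
lemma exists_common_limPt {x y : Set Ordinal.{u}} {β : Ordinal.{u}}
    (hcof : Cardinal.aleph0 < β.cof)
    (hx : ∀ a < β, ∃ b, b ∈ x ∧ a < b ∧ b < β)
    (hy : ∀ a < β, ∃ b, b ∈ y ∧ a < b ∧ b < β)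
    {a : Ordinal.{u}} (ha : a < β) :
    ∃ γ, a < γ ∧ γ < β ∧ γ ∈ limPts x ∧ γ ∈ limPts y := by
  classical
  -- step functions
  have stepx : ∀ o : {o : Ordinal.{u} // o < β}, {b : Ordinal.{u} // b ∈ x ∧ o.1 < b ∧ b < β} :=
    fun o => ⟨(hx o.1 o.2).choose, (hx o.1 o.2).choose_spec⟩
  have stepy : ∀ o : {o : Ordinal.{u} // o < β}, {b : Ordinal.{u} // b ∈ y ∧ o.1 < b ∧ b < β} :=
    fun o => ⟨(hy o.1 o.2).choose, (hy o.1 o.2).choose_spec⟩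
  -- w n : n-th stage; w (n+1) = stepy (stepx (w n))
  let next : {o : Ordinal.{u} // o < β} → {o : Ordinal.{u} // o < β} :=
    fun o => ⟨(stepy ⟨(stepx o).1, (stepx o).2.2.2⟩).1, (stepy ⟨(stepx o).1, (stepx o).2.2.2⟩).2.2.2⟩
  let w : ℕ → {o : Ordinal.{u} // o < β} := fun n => next^[n + 1] ⟨a, ha⟩
  have hwsucc : ∀ n, w (n + 1) = next (w n) := by
    intro n
    simp only [w, Function.iterate_succ_apply']
  have hxmem : ∀ n, (stepx (w n)).1 ∈ x ∧ (w n).1 < (stepx (w n)).1 ∧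
      (stepx (w n)).1 < (w (n + 1)).1 := by
    intro n
    refine ⟨(stepx (w n)).2.1, (stepx (w n)).2.2.1, ?_⟩
    rw [hwsucc n]
    exact (stepy ⟨(stepx (w n)).1, (stepx (w n)).2.2.2⟩).2.2.1
  have hymem : ∀ n, (w (n + 1)).1 ∈ y := by
    intro n
    rw [hwsucc n]
    exact (stepy ⟨(stepx (w n)).1, (stepx (w n)).2.2.2⟩).2.1
  have hwmono : ∀ n, (w n).1 < (w (n + 1)).1 := fun n =>
    (hxmem n).2.1.trans (hxmem n).2.2
  have haw : a < (w 0).1 := by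
    have : (w 0) = next ⟨a, ha⟩ := rfl
    rw [this]
    exact lt_trans (stepx ⟨a, ha⟩).2.2.1 (stepy ⟨(stepx ⟨a, ha⟩).1, (stepx ⟨a, ha⟩).2.2.2⟩).2.2.1
  set γ := ⨆ n, (w n).1 with hγ
  have hbdd : BddAbove (range fun n => (w n).1) := Ordinal.bddAbove_range _
  have hγβ : γ < β := iSup_lt_ord_lift (c := β) (by rw [Cardinal.mk_nat, Cardinal.lift_aleph0]; exact hcof) (fun n => (w n).2)
  have hwle : ∀ n, (w n).1 ≤ γ := fun n => le_ciSup hbdd n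
  have hwlt : ∀ n, (w n).1 < γ := fun n => (hwmono n).trans_le (hwle (n + 1))
  have hγmem : γ ∉ range fun n => (w n).1 := by
    rintro ⟨n, hn⟩
    exact absurd (hn ▸ hwlt n) (lt_irrefl γ)
  have hγlim : IsSuccLimit γ := isLimit_sSup_of_not_mem (range_nonempty _) hbdd hγmem
  have haγ : a < γ := haw.trans_le (hwle 0)
  -- limPts x
  have hxlim : γ ∈ limPts x := by
    refine ⟨hγlim, le_antisymm (csSup_le ⟨(stepx (w 0)).1, (hxmem 0).1,
      (hxmem 0).2.2.trans_le (hwle 1)⟩ fun z hz => hz.2.le) (csSup_le (range_nonempty _) ?_)⟩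
    rintro _ ⟨n, rfl⟩
    have : (stepx (w n)).1 ∈ x ∩ Iio γ :=
      ⟨(hxmem n).1, (hxmem n).2.2.trans_le (hwle (n + 1))⟩
    exact ((hxmem n).2.1.le).trans (le_csSup ⟨γ, fun z hz => hz.2.le⟩ this)
  have hylim : γ ∈ limPts y := by
    refine ⟨hγlim, le_antisymm (csSup_le ⟨(w 1).1, hymem 0, hwlt 1⟩ fun z hz => hz.2.le)
      (csSup_le (range_nonempty _) ?_)⟩
    rintro _ ⟨n, rfl⟩
    have : (w (n + 1)).1 ∈ y ∩ Iio γ := ⟨hymem n, hwlt (n + 1)⟩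
    exact ((hwmono n).le).trans (le_csSup ⟨γ, fun z hz => hz.2.le⟩ this)
  exact ⟨γ, haγ, hγβ, hxlim, hylim⟩

lemma le_succIt (α : Cardinal.{u}) (k : ℕ) : α ≤ succIt α k := by
  induction k with
  | zero => exact le_rfl
  | succ k IH => exact IH.trans (le_succ _)

lemma aleph0_le_succIt {α : Cardinal.{u}} (h : Cardinal.aleph0 ≤ α) (k : ℕ) :
    Cardinal.aleph0 ≤ succIt α k := h.trans (le_succIt α k)

end SqAux

namespace SqAux
open Ordinal

lemma limPts_inter_nonempty {X : Set Ordinal.{u}} {γ : Ordinal.{u}} (hγ : γ ∈ limPts X) :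
    (X ∩ Iio γ).Nonempty := by
  rcases (X ∩ Iio γ).eq_empty_or_nonempty with h | h
  · have h2 := hγ.2
    rw [h, csSup_empty] at h2
    exact absurd h2.symm (by simpa using hγ.1.pos.ne')
  · exact h

lemma clubIn_inter_Ioi {c : Set Ordinal.{u}} {lam ηs : Ordinal.{u}} (hc : IsClubIn c lam)
    (hηs : ηs < lam) : IsClubIn (c ∩ Ioi ηs) lam := by
  refine ⟨fun x hx => hc.1 hx.1, ?_, ?_⟩
  · intro s hs hne hlt
    refine ⟨hc.2.1 s (fun z hz => (hs hz).1) hne hlt, ?_⟩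
    obtain ⟨z, hz⟩ := hne
    exact lt_of_lt_of_le (hs hz).2 (le_csSup ⟨lam, fun w hw => (hc.1 (hs hw).1).le⟩ hz)
  · intro a ha
    obtain ⟨x, hx, hax⟩ := hc.2.2 (max a ηs) (max_lt ha hηs)
    exact ⟨x, ⟨hx, lt_of_le_of_lt (le_max_right a ηs) hax⟩, lt_of_le_of_lt (le_max_left a ηs) hax⟩

/-- The main inductive claim. -/
lemma claim (S : GlobalSquare) (ν : Ordinal.{0} → ℕ) (hν : IsAssocFn S ν) (δ : Ordinal.{0}) :
    ∀ k : ℕ, ∀ lam c, IsClubIn c lam → succIt (Cardinal.aleph0 ⊔ δ.card) k < lam.cof →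
    ∀ η < lam,
    ∃ D : Set Ordinal.{0}, D ⊆ {β | IsSing β ∧ k ≤ ν β} ∧ D ⊆ limPts c ∧ D ⊆ Iio lam ∧
      IsClosedSet D ∧ δ ≤ otype D ∧ ∀ x ∈ D, η < x := by
  intro k
  set ρ0 : Cardinal.{0} := Cardinal.aleph0 ⊔ δ.card with hρ0
  have hℵρ0 : Cardinal.aleph0 ≤ ρ0 := le_sup_left
  induction k with
  | zero =>
    intro lam c hc hcof η hη
    have hρ : ρ0 < lam.cof := hcof
    have hlam : IsSuccLimit lam := Ordinal.aleph0_le_cof.1 (hℵρ0.trans hρ.le)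
    set ηs := max η ρ0.ord with hηsdef
    have hηs : ηs < lam :=
      max_lt hη (lt_of_lt_of_le (Cardinal.ord_lt_ord.2 hρ) (Ordinal.ord_cof_le lam))
    set c'' := c ∩ Ioi ηs with hc''def
    have hc'' : IsClubIn c'' lam := clubIn_inter_Ioi hc hηs
    set g : Ordinal.{0} → Ordinal.{0} := fun ι => Ordinal.omega0 * (1 + ι) with hgdef
    have hg : IsNormal g := (isNormal_mul_right omega0_pos).comp (isNormal_add_right 1)
    set F := enumOrd (cext c'' lam) with hFdef
    have hnF : IsNormal F := cext_isNormal hc''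
    have hcard : ∀ ι ≤ δ, (g ι).card ≤ ρ0 := by
      intro ι hιδ
      have h1 : (g ι).card = Cardinal.aleph0 * (1 + ι.card) := by
        simp only [hgdef, card_mul, card_omega0, card_add, card_one]
      rw [h1]
      calc Cardinal.aleph0 * (1 + ι.card)
          ≤ Cardinal.aleph0 * (Cardinal.aleph0 + δ.card) :=
            mul_le_mul_right (add_le_add Cardinal.one_le_aleph0 (Ordinal.card_le_card hιδ)) _
        _ = Cardinal.aleph0 * ρ0 := by
            rw [Cardinal.add_eq_max le_rfl]
        _ = ρ0 := by
            rw [Cardinal.mul_eq_max le_rfl hℵρ0, max_eq_right hℵρ0]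
    have hglim : ∀ ι : Ordinal.{0}, IsSuccLimit (g ι) := fun ι =>
      isSuccLimit_mul_left isSuccLimit_omega0 (lt_of_lt_of_le zero_lt_one (le_self_add : (1 : Ordinal) ≤ 1 + ι))
    refine ⟨F '' (g '' Iic δ), ?_, ?_, ?_, ?_, ?_, ?_⟩
    · rintro _ ⟨_, ⟨ι, hιδ, rfl⟩, rfl⟩
      have hlt : F (g ι) < lam := enum_lt_lam hc'' ((hcard ι hιδ).trans_lt hρ)
      have hlp : F (g ι) ∈ limPts c'' := enum_limit_mem_limPts hc'' (hglim ι) hlt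
      have hηsx : ηs < F (g ι) := (limPts_inter_Ioi hlp).2
      refine ⟨⟨hlp.1, ?_⟩, Nat.zero_le _⟩
      have hcof' : (F (g ι)).cof = (g ι).cof := cof_map_of_isNormal hnF (hglim ι)
      calc (F (g ι)).cof.ord ≤ ρ0.ord := by
            rw [hcof']
            exact Cardinal.ord_le_ord.2 ((Ordinal.cof_le_card _).trans (hcard ι hιδ))
        _ ≤ ηs := le_max_right η ρ0.ord
        _ < F (g ι) := hηsx
    · rintro _ ⟨_, ⟨ι, hιδ, rfl⟩, rfl⟩
      have hlt : F (g ι) < lam := enum_lt_lam hc'' ((hcard ι hιδ).trans_lt hρ)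
      exact (limPts_inter_Ioi (enum_limit_mem_limPts hc'' (hglim ι) hlt)).1
    · rintro _ ⟨_, ⟨ι, hιδ, rfl⟩, rfl⟩
      exact enum_lt_lam hc'' ((hcard ι hιδ).trans_lt hρ)
    · refine isClosedSet_image hnF (isClosedSet_image hg ?_)
      intro s hs hne hb
      exact mem_Iic.2 (csSup_le hne fun z hz => hs hz)
    · have h1 : otype (F '' (g '' Iic δ)) = otype (Iic δ) := by
        rw [otype_image hnF.strictMono, otype_image hg.strictMono]
      rw [h1, ← Iio_succ, otype_Iio]
      exact (le_succ δ)
    · rintro _ ⟨_, ⟨ι, hιδ, rfl⟩, rfl⟩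
      have hlt : F (g ι) < lam := enum_lt_lam hc'' ((hcard ι hιδ).trans_lt hρ)
      have hηsx : ηs < F (g ι) := (limPts_inter_Ioi (enum_limit_mem_limPts hc'' (hglim ι) hlt)).2
      exact lt_of_le_of_lt (le_max_left η ρ0.ord) hηsx
  | succ k IH =>
    intro lam c hc hcof η hη
    set ρk := succIt ρ0 k with hρkdef
    have hℵρk : Cardinal.aleph0 ≤ ρk := aleph0_le_succIt hℵρ0 k
    set μ : Cardinal.{0} := Order.succ ρk with hμdef
    have hcofμ : μ < lam.cof := hcof
    have hμreg : μ.IsRegular := Cardinal.isRegular_succ hℵρk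
    have hℵμ : Cardinal.aleph0 ≤ μ := hℵρk.trans (le_succ ρk)
    have hlam : IsSuccLimit lam := Ordinal.aleph0_le_cof.1 (hℵμ.trans hcofμ.le)
    set ηs := max η μ.ord with hηsdef
    have hηs : ηs < lam :=
      max_lt hη (lt_of_lt_of_le (Cardinal.ord_lt_ord.2 hcofμ) (Ordinal.ord_cof_le lam))
    set c'' := c ∩ Ioi ηs with hc''def
    have hc'' : IsClubIn c'' lam := clubIn_inter_Ioi hc hηs
    set F := enumOrd (cext c'' lam) with hFdef
    have hnF : IsNormal F := cext_isNormal hc''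
    have hμord : IsSuccLimit μ.ord := Cardinal.isSuccLimit_ord hℵμ
    set β := F μ.ord with hβdef
    have hβlam : β < lam := enum_lt_lam hc'' (by rw [Cardinal.card_ord]; exact hcofμ)
    have hβlp : β ∈ limPts c'' := enum_limit_mem_limPts hc'' hμord hβlam
    have hβcof : β.cof = μ := by
      rw [hβdef, cof_map_of_isNormal hnF hμord, hμreg.cof_eq]
    have hβηs : ηs < β := (limPts_inter_Ioi hβlp).2
    have hβsing : IsSing β := by
      refine ⟨hβlp.1, ?_⟩
      rw [hβcof]
      exact lt_of_le_of_lt (le_max_right η μ.ord) hβηs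
    have hclubβ : IsClubIn (S.C β) β := S.club β hβsing
    have hβlim : IsSuccLimit β := hβlp.1
    set f := enumOrd (cext (S.C β) β) with hfdef
    have hnf : IsNormal f := cext_isNormal hclubβ
    obtain ⟨p, hplim, hfp, hiff, himg, hotp, hpcof⟩ := club_position hclubβ hβlim
    have hpcofμ : p.cof = μ := hpcof.trans hβcof
    set e := {ξ : Ordinal.{0} | ξ < p ∧ IsSuccLimit ξ ∧ f ξ ∈ limPts c''} with hedef
    have he : IsClubIn e p := by
      refine ⟨fun ξ hξ => hξ.1, ?_, ?_⟩
      · intro s hs hne hlt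
        by_cases hmem : sSup s ∈ s
        · exact hs hmem
        · have hbdds : BddAbove s := ⟨p, fun z hz => (hs hz).1.le⟩
          have hξlim : IsSuccLimit (sSup s) := isLimit_sSup_of_not_mem hne hbdds hmem
          have hbddf : BddAbove (f '' s) :=
            ⟨f (sSup s), by
              rintro _ ⟨w, hw, rfl⟩
              exact hnf.strictMono.monotone (le_csSup hbdds hw)⟩
          have key : sSup (f '' s) = f (sSup s) := map_sSup hnf hne hbdds
          have hfmem : f (sSup s) ∈ limPts c'' := by
            rw [← key]
            exact isClosedSet_limPts c'' (f '' s)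
              (by rintro _ ⟨w, hw, rfl⟩; exact (hs hw).2.2) (hne.image f) hbddf
          exact ⟨hlt, hξlim, hfmem⟩
      · intro a ha
        have hfa : f a < β := (hiff a).1 ha
        have hxub : ∀ b < β, ∃ z, z ∈ S.C β ∧ b < z ∧ z < β := by
          intro b hb
          obtain ⟨z, hz, hbz⟩ := hclubβ.2.2 b hb
          exact ⟨z, hz, hbz, hclubβ.1 hz⟩
        have hyub : ∀ b < β, ∃ z, z ∈ c'' ∧ b < z ∧ z < β := by
          intro b hb
          obtain ⟨z, hz, hbz⟩ := exists_lt_of_lt_csSup (limPts_inter_nonempty hβlp)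
            (by rw [hβlp.2]; exact hb)
          exact ⟨z, hz.1, hbz, hz.2⟩
        have hℵβ : Cardinal.aleph0 < β.cof := by
          rw [hβcof]
          exact lt_of_le_of_lt hℵρk (lt_succ ρk)
        obtain ⟨γ, hγa, hγβ, hγx, hγy⟩ := exists_common_limPt hℵβ hxub hyub hfa
        obtain ⟨j, hjp, hjlim, hfj⟩ := limPts_index hclubβ hiff himg hγx hγβ
        refine ⟨j, ⟨hjp, hjlim, by rw [show f j = γ from hfj]; exact hγy⟩, ?_⟩
        exact hnf.strictMono.lt_iff_lt.1 (by rw [show f j = γ from hfj]; exact hγa)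
    obtain ⟨E, hE1, hE2, hE3, hE4, hE5, -⟩ :=
      IH p e he (by rw [hpcofμ]; exact lt_succ ρk) 0 hplim.pos
    -- facts about each element of `E`
    have hξfacts : ∀ ξ ∈ E, (IsSing (f ξ) ∧ k + 1 ≤ ν (f ξ)) ∧ f ξ ∈ limPts c'' ∧ f ξ < β := by
      intro ξ hξ
      have hξe : ξ ∈ e := by
        have hne' := limPts_inter_nonempty (hE2 hξ)
        have := he.2.1 (e ∩ Iio ξ) inter_subset_left hne'
          (by rw [(hE2 hξ).2]; exact hE3 hξ)
        rwa [(hE2 hξ).2] at this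
      obtain ⟨hξp, hξlim, hfξc''⟩ := hξe
      have hfξβ : f ξ < β := (hiff ξ).1 hξp
      have hIio : S.C β ∩ Iio (f ξ) = f '' Iio ξ := by
        ext z
        constructor
        · rintro ⟨hz1, hz2⟩
          obtain ⟨r, hr, rfl⟩ := by rw [← himg] at hz1; exact hz1
          exact ⟨r, hnf.strictMono.lt_iff_lt.1 hz2, rfl⟩
        · rintro ⟨j, hj, rfl⟩
          constructor
          · rw [← himg]
            exact ⟨j, hj.trans hξp, rfl⟩
          · exact hnf.strictMono hj
      have hγlpCβ : f ξ ∈ limPts (S.C β) := by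
        refine ⟨hnf.map_isSuccLimit hξlim, ?_⟩
        rw [hIio]
        exact (map_Iio_sSup hnf hξlim).symm
      have hcoh := S.coh β hβsing (f ξ) hγlpCβ hfξβ
      have hot : otype (S.C (f ξ)) = ξ := by
        rw [hcoh.2, hIio, otype_image hnf.strictMono, otype_Iio]
      obtain ⟨hsingξ, hνξ⟩ := hE1 hξ
      have hνfξ : ν (f ξ) = ν ξ + 1 := by
        rw [hν (f ξ) hcoh.1, hot, if_pos hsingξ]
      exact ⟨⟨hcoh.1, by rw [hνfξ]; exact Nat.succ_le_succ hνξ⟩, hfξc'', hfξβ⟩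
    refine ⟨f '' E, ?_, ?_, ?_, isClosedSet_image hnf hE4, ?_, ?_⟩
    · rintro _ ⟨ξ, hξ, rfl⟩
      exact (hξfacts ξ hξ).1
    · rintro _ ⟨ξ, hξ, rfl⟩
      exact (limPts_inter_Ioi (hξfacts ξ hξ).2.1).1
    · rintro _ ⟨ξ, hξ, rfl⟩
      exact (hξfacts ξ hξ).2.2.trans hβlam
    · rw [otype_image hnf.strictMono]
      exact hE5
    · rintro _ ⟨ξ, hξ, rfl⟩
      exact lt_of_le_of_lt (le_max_left η μ.ord) (limPts_inter_Ioi (hξfacts ξ hξ).2.1).2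

end SqAux

/-- `C ∩ {β | n β ≥ k}` contains arbitrarily long closed subsets,
arbitrarily high up, for every club class `C`. -/
theorem arbitrarily_long_closed_subsets (S : GlobalSquare) (ν : Ordinal → ℕ)
    (hν : IsAssocFn S ν) (k : ℕ)
    (C : Set Ordinal) (hclosed : IsClosedSet C) (hub : ∀ η, ∃ x ∈ C, η < x)
    (δ η : Ordinal) :
    ∃ D : Set Ordinal, D ⊆ C ∩ {β | IsSing β ∧ k ≤ ν β} ∧
      IsClosedSet D ∧ δ ≤ otype D ∧ ∀ x ∈ D, η < x := by
  classical
  open SqAux Ordinal in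
  -- the restricted club class
  set C' := C ∩ Ioi η with hC'def
  have hC'closed : IsClosedSet C' := by
    intro s hs hne hb
    refine ⟨hclosed s (fun z hz => (hs hz).1) hne hb, ?_⟩
    obtain ⟨z, hz⟩ := hne
    exact lt_of_lt_of_le (hs hz).2 (le_csSup hb hz)
  have hub' : ¬ BddAbove C' := by
    rintro ⟨b, hb⟩
    obtain ⟨x, hx, hmx⟩ := hub (max b η)
    have hxC' : x ∈ C' := ⟨hx, lt_of_le_of_lt (le_max_right b η) hmx⟩
    exact absurd ((lt_of_le_of_lt (le_max_left b η) hmx).trans_le (hb hxC')) (lt_irrefl b)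
  have hC'isClosed : IsClosed C' := by
    rw [Ordinal.isClosed_iff_iSup]
    intro ι hι g hg
    exact hC'closed (range g) (range_subset_iff.2 hg) (range_nonempty g)
      (Ordinal.bddAbove_range g)
  set G := Ordinal.enumOrd C' with hGdef
  have hG : Order.IsNormal G := (Ordinal.enumOrd_isNormal_iff_isClosed hub').2 hC'isClosed
  set ρk := succIt (Cardinal.aleph0 ⊔ δ.card) k with hρkdef
  have hℵρk : Cardinal.aleph0 ≤ ρk := SqAux.aleph0_le_succIt le_sup_left k
  set κ : Cardinal := Order.succ ρk with hκdef
  have hℵκ : Cardinal.aleph0 ≤ κ := hℵρk.trans (le_succ ρk)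
  have hκord : IsSuccLimit κ.ord := Cardinal.isSuccLimit_ord hℵκ
  set lam := G κ.ord with hlamdef
  have hlamcof : lam.cof = κ := by
    rw [hlamdef, cof_map_of_isNormal hG hκord, (Cardinal.isRegular_succ hℵρk).cof_eq]
  have hGmem : ∀ j, G j ∈ C' := Ordinal.enumOrd_mem hub'
  have hlamlim : IsSuccLimit lam := hG.map_isSuccLimit hκord
  set c := C' ∩ Iio lam with hcdef
  have hclub : IsClubIn c lam := by
    refine ⟨fun x hx => hx.2, ?_, ?_⟩
    · intro s hs hne hlt
      refine ⟨hC'closed s (fun z hz => (hs hz).1) hne ⟨lam, fun z hz => ((hs hz).2).le⟩, hlt⟩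
    · intro a ha
      have hsup : lam = sSup (G '' Iio κ.ord) := SqAux.map_Iio_sSup hG hκord
      obtain ⟨z, hz, haz⟩ := exists_lt_of_lt_csSup
        (⟨G 0, 0, hκord.pos, rfl⟩ : (G '' Iio κ.ord).Nonempty) (by rw [← hsup]; exact ha)
      obtain ⟨j, hj, rfl⟩ := hz
      exact ⟨G j, ⟨hGmem j, hG.strictMono hj⟩, haz⟩
  obtain ⟨D, hD1, hD2, hD3, hD4, hD5, -⟩ := SqAux.claim S ν hν δ k lam c hclub
    (by rw [hlamcof]; exact lt_succ ρk) 0 hlamlim.pos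
  have hDC : ∀ x ∈ D, x ∈ C ∧ η < x := by
    intro x hx
    have hxlp := hD2 hx
    have hne' := SqAux.limPts_inter_nonempty hxlp
    have hmem := hC'closed (c ∩ Iio x) (fun z hz => hz.1.1) hne'
      ⟨x, fun z hz => hz.2.le⟩
    rw [hxlp.2] at hmem
    exact ⟨hmem.1, hmem.2⟩
  refine ⟨D, fun x hx => ⟨(hDC x hx).1, hD1 hx⟩, hD4, hD5, fun x hx => (hDC x hx).2⟩
end

section
/- Let (C_β) be a global square sequence with associated function n, fix k ∈ ℕ, and let P be the associated class forcing ordered by end-extension. Suppose p ∈ P, D is a dense open subclass of P, and β is an ordinal with β > sup p such that β is a regular cardinal or n(β) ≥ k+1, and such that for every r ∈ P with sup r < β there exists s ∈ D with s ≤ r and sup s < β. Then there exists q ∈ P with q ≤ p, q ∈ D, and max q = β. -/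
open Set

/-- meeting one dense open class with a condition whose maximum
is a prescribed suitable closure point `β`. -/
theorem extend_into_dense_with_max (S : GlobalSquare) (ν : Ordinal → ℕ)
    (hν : IsAssocFn S ν) (k : ℕ)
    (p : Set Ordinal) (hp : p ∈ Pforcing ν k)
    (D : Set (Set Ordinal)) (hDsub : D ⊆ Pforcing ν k)
    (hdense : ∀ r ∈ Pforcing ν k, ∃ q ∈ D, EndExt q r)
    (hopen : ∀ r ∈ Pforcing ν k, ∀ q ∈ D, EndExt r q → r ∈ D)
    (β : Ordinal) (hβgt : sSup p < β)
    (hβ : IsRegOrd β ∨ (IsSing β ∧ k + 1 ≤ ν β))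
    (hcatch : ∀ r ∈ Pforcing ν k, sSup r < β →
      ∃ s ∈ D, EndExt s r ∧ sSup s < β) :
    ∃ q ∈ Pforcing ν k, EndExt q p ∧ q ∈ D ∧ β ∈ q ∧ ∀ x ∈ q, x ≤ β := by

  obtain ⟨s, hsD, hse, hss⟩ := hcatch p hp hβgt
  obtain ⟨hsne, hscl, hsbdd, hsmem⟩ := hDsub hsD
  have hlt : ∀ x ∈ s, x < β := fun x hx => lt_of_le_of_lt (le_csSup hsbdd hx) hss
  have hqP : insert β s ∈ Pforcing ν k := by
    refine ⟨⟨β, mem_insert _ _⟩, ?_, ⟨β, ?_⟩, ?_⟩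
    · intro t hts htne htbdd
      by_cases hβt : β ∈ t
      · have h1 : sSup t = β := le_antisymm (csSup_le htne (fun x hx => by
          rcases mem_insert_iff.mp (hts hx) with h | h
          · exact le_of_eq h
          · exact (hlt x h).le)) (le_csSup htbdd hβt)
        rw [h1]; exact mem_insert _ _
      · have hts' : t ⊆ s := fun x hx =>
          (mem_insert_iff.mp (hts hx)).resolve_left (fun h => hβt (h ▸ hx))
        exact mem_insert_of_mem _
          (hscl t hts' htne ⟨sSup s, fun x hx => le_csSup hsbdd (hts' hx)⟩)
    · intro x hx
      rcases mem_insert_iff.mp hx with h | h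
      · exact le_of_eq h
      · exact (hlt x h).le
    · intro α hα
      rcases mem_insert_iff.mp hα with h | h
      · exact h ▸ hβ
      · exact hsmem α h
  refine ⟨insert β s, hqP, ?_, ?_, mem_insert _ _, ?_⟩
  · obtain ⟨hps, hse2⟩ := hse
    refine ⟨fun x hx => mem_insert_of_mem _ (hps hx), ?_⟩
    intro x hx y hy
    rcases mem_insert_iff.mp hx.1 with h | h
    · exact h ▸ lt_of_le_of_lt (le_csSup hp.2.2.1 hy) hβgt
    · exact hse2 x ⟨h, hx.2⟩ y hy
  · refine hopen _ hqP s hsD ⟨fun x hx => mem_insert_of_mem _ hx, ?_⟩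
    intro x hx y hy
    rcases mem_insert_iff.mp hx.1 with h | h
    · exact h ▸ hlt y hy
    · exact absurd h hx.2
  · intro x hx
    rcases mem_insert_iff.mp hx with h | h
    · exact le_of_eq h
    · exact (hlt x h).le
end

section
/- Let (C_β) be a global square sequence with associated function n, fix k ∈ ℕ, and let P be the associated class forcing ordered by end-extension. Let λ be a limit ordinal, let ⟨p_i : i < λ⟩ be a ≤-decreasing sequence of elements of P, and let β = sup_{i<λ} (max p_i). If β is a regular cardinal or n(β) ≥ k+1, then q = (⋃_{i<λ} p_i) ∪ {β} is an element of P and q ≤ p_i for every i < λ. -/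
open Set

/-- unions of decreasing sequences of conditions, capped by a
suitable ordinal `β`, are conditions extending every member of the sequence. -/
theorem Pforcing_limit_condition (S : GlobalSquare) (ν : Ordinal → ℕ)
    (hν : IsAssocFn S ν) (k : ℕ)
    (lam : Ordinal) (hlam : Order.IsSuccLimit lam)
    (p : Ordinal → Set Ordinal) (hp : ∀ i < lam, p i ∈ Pforcing ν k)
    (hdec : ∀ i j, i ≤ j → j < lam → EndExt (p j) (p i))
    (β : Ordinal) (hβ : β = sSup ((fun i => sSup (p i)) '' Set.Iio lam))
    (hβok : IsRegOrd β ∨ (IsSing β ∧ k + 1 ≤ ν β)) :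
    (⋃ i ∈ Set.Iio lam, p i) ∪ {β} ∈ Pforcing ν k ∧
    ∀ i < lam, EndExt ((⋃ j ∈ Set.Iio lam, p j) ∪ {β}) (p i) := by
  have hlam0 : (0:Ordinal) < lam := hlam.pos
  have himg_ne : ((fun i => sSup (p i)) '' Set.Iio lam).Nonempty :=
    ⟨sSup (p 0), 0, hlam0, rfl⟩
  have himg_bdd : BddAbove ((fun i => sSup (p i)) '' Set.Iio lam) := by
    by_contra hnb
    have h0 : β = 0 := by
      rw [hβ, csSup_of_not_bddAbove hnb, csSup_empty]
      rfl
    rcases hβok with ⟨κ, hκ, hord⟩ | ⟨hsing, _⟩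
    · rw [h0] at hord
      have hκ0 : κ = 0 := Cardinal.ord_eq_zero.mp hord.symm
      have := hκ.aleph0_le
      rw [hκ0] at this
      simp only [le_zero_iff] at this
      exact Cardinal.aleph0_ne_zero this
    · rw [h0] at hsing
      exact absurd hsing.1.pos (lt_irrefl 0)
  have hsupmem : ∀ i, i < lam → sSup (p i) ∈ p i := by
    intro i hi
    obtain ⟨hne, hcl, hbd, _⟩ := hp i hi
    exact hcl (p i) subset_rfl hne hbd
  have hsup_le : ∀ i, i < lam → sSup (p i) ≤ β := by
    intro i hi
    rw [hβ]
    exact le_csSup himg_bdd ⟨i, hi, rfl⟩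
  have hle : ∀ i, i < lam → ∀ x ∈ p i, x ≤ β := fun i hi x hx =>
    le_trans (le_csSup (hp i hi).2.2.1 hx) (hsup_le i hi)
  have hmemU : ∀ x ∈ (⋃ i ∈ Set.Iio lam, p i), ∃ i < lam, x ∈ p i := by
    intro x hx; simpa using hx
  have hqle : ∀ x ∈ (⋃ i ∈ Set.Iio lam, p i) ∪ {β}, x ≤ β := by
    intro x hx
    rcases hx with hx | hx
    · obtain ⟨i, hi, hxi⟩ := hmemU x hx
      exact hle i hi x hxi
    · exact le_of_eq hx
  have hclosed : IsClosedSet ((⋃ i ∈ Set.Iio lam, p i) ∪ {β}) := by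
    intro s hs hsne hsbd
    have hsup_le_β : sSup s ≤ β := csSup_le hsne fun x hx => hqle x (hs hx)
    rcases eq_or_lt_of_le hsup_le_β with heq | hlt
    · exact Or.inr heq
    · have hex : ∃ b ∈ ((fun i => sSup (p i)) '' Set.Iio lam), sSup s < b := by
        rw [hβ] at hlt
        exact exists_lt_of_lt_csSup himg_ne hlt
      obtain ⟨b, ⟨i, hi, rfl⟩, hb⟩ := hex
      have hsub : s ⊆ p i := by
        intro x hx
        rcases hs hx with hxU | hxβ
        · obtain ⟨j, hj, hxj⟩ := hmemU x hxU
          rcases le_total j i with hji | hij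
          · exact (hdec j i hji hi).1 hxj
          · by_contra hxi
            have hlt2 := (hdec i j hij hj).2 x ⟨hxj, hxi⟩ (sSup (p i)) (hsupmem i hi)
            exact lt_irrefl _ (lt_trans hlt2 (lt_of_le_of_lt (le_csSup hsbd hx) hb))
        · exfalso
          have hxb : x = β := hxβ
          have : x ≤ sSup s := le_csSup hsbd hx
          rw [hxb] at this
          exact absurd hlt (not_lt.mpr this)
      exact Or.inl (Set.mem_biUnion hi ((hp i hi).2.1 s hsub hsne hsbd))
  refine ⟨⟨⟨β, Or.inr rfl⟩, hclosed, ⟨β, fun x hx => hqle x hx⟩, ?_⟩, ?_⟩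
  · intro α hα
    rcases hα with hαU | hαβ
    · obtain ⟨i, hi, hαi⟩ := hmemU α hαU
      exact (hp i hi).2.2.2 α hαi
    · have : α = β := hαβ
      rw [this]; exact hβok
  · intro i hi
    refine ⟨fun x hx => Or.inl (Set.mem_biUnion hi hx), ?_⟩
    intro x hx y hy
    rcases hx.1 with hxU | hxβ
    · obtain ⟨j, hj, hxj⟩ := hmemU x hxU
      rcases le_total j i with hji | hij
      · exact absurd ((hdec j i hji hi).1 hxj) hx.2
      · exact (hdec i j hij hj).2 x ⟨hxj, hx.2⟩ y hy
    · have hxb : x = β := hxβ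
      have hyβ : y ≤ β := hle i hi y hy
      rcases lt_or_eq_of_le hyβ with h | h
      · rw [hxb]; exact h
      · exfalso; apply hx.2; rw [hxb, ← h]; exact hy
end
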